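/- arXiv:2409.19567 — 5 statements merged into one kernel-verified Lean document; each statement's English description precedes it below -/
import Mathlib

section
/- Let h : ℝ^d → ℝ be L-smooth. For any x, x̃, y ∈ ℝ^d and real numbers u, ũ with 0 < u ≤ ũ, define for each l ∈ {1,…,d} the vector g(l) = G_h^{(c)}(x,u,l) − G_h^{(c)}(x̃,ũ,l) + G_h^{(2d)}(x̃,ũ). Then (1/d)·Σ_{l=1}^d ‖g(l) − ∇h(x)‖² ≤ 12·d·L²·‖x − y‖² + 12·d·L²·‖x̃ − y‖² + (7/2)·ũ²·L²·d². -/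
noncomputable section

open Finset

/-- The coordinate-wise zeroth-order gradient estimator
`G_h^{(c)}(x,u,l) = d ((h(x+u e_l) − h(x−u e_l))/(2u)) e_l`. -/
def Gc (d : ℕ) (h : EuclideanSpace ℝ (Fin d) → ℝ) (x : EuclideanSpace ℝ (Fin d)) (u : ℝ)
    (l : Fin d) : EuclideanSpace ℝ (Fin d) :=
  ((d : ℝ) * ((h (x + u • EuclideanSpace.single l (1 : ℝ))
      - h (x - u • EuclideanSpace.single l (1 : ℝ))) / (2 * u))) • EuclideanSpace.single l (1 : ℝ)

/-- The `2d`-point zeroth-order gradient estimator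
`G_h^{(2d)}(x,u) = Σ_{l=1}^d ((h(x+u e_l) − h(x−u e_l))/(2u)) e_l`. -/
def G2d (d : ℕ) (h : EuclideanSpace ℝ (Fin d) → ℝ) (x : EuclideanSpace ℝ (Fin d)) (u : ℝ) :
    EuclideanSpace ℝ (Fin d) :=
  ∑ l : Fin d, ((h (x + u • EuclideanSpace.single l (1 : ℝ))
      - h (x - u • EuclideanSpace.single l (1 : ℝ))) / (2 * u)) • EuclideanSpace.single l (1 : ℝ)


lemma grad_cont {d : ℕ} {L : ℝ} {h : EuclideanSpace ℝ (Fin d) → ℝ}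
    (hsmooth : ∀ x y, ‖gradient h x - gradient h y‖ ≤ L * ‖x - y‖) :
    Continuous (gradient h) := by
  refine (LipschitzWith.of_dist_le_mul (K := L.toNNReal) fun p q => ?_).continuous
  rw [dist_eq_norm, dist_eq_norm]
  exact (hsmooth p q).trans
    (mul_le_mul_of_nonneg_right (Real.le_coe_toNNReal L) (norm_nonneg _))

lemma quad_bound {d : ℕ} {L : ℝ} {h : EuclideanSpace ℝ (Fin d) → ℝ}
    (hdiff : Differentiable ℝ h)
    (hsmooth : ∀ x y, ‖gradient h x - gradient h y‖ ≤ L * ‖x - y‖)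
    (x v : EuclideanSpace ℝ (Fin d)) :
    |h (x + v) - h x - inner ℝ (gradient h x) v| ≤ L / 2 * ‖v‖ ^ 2 := by
  have hφ : ∀ t : ℝ, HasDerivAt (fun t : ℝ => h (x + t • v))
      (inner ℝ (gradient h (x + t • v)) v : ℝ) t := by
    intro t
    have h1 : HasFDerivAt h
        (InnerProductSpace.toDual ℝ _ (gradient h (x + t • v))) (x + t • v) :=
      ((hdiff _).hasGradientAt).hasFDerivAt
    have h2 : HasDerivAt (fun t : ℝ => x + t • v) v t := by
      simpa using ((hasDerivAt_id t).smul_const v).const_add x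
    exact h1.comp_hasDerivAt t h2
  have hcont : Continuous fun t : ℝ => (inner ℝ (gradient h (x + t • v)) v : ℝ) := by
    exact (Continuous.inner ((grad_cont hsmooth).comp (by continuity)) continuous_const)
  have key : ∫ t in (0:ℝ)..1, (inner ℝ (gradient h (x + t • v)) v : ℝ)
      = h (x + v) - h x := by
    have := intervalIntegral.integral_eq_sub_of_hasDerivAt
      (f := fun t : ℝ => h (x + t • v)) (fun t _ => hφ t)
      (hcont.intervalIntegrable 0 1)
    simpa using this
  have hsub : h (x + v) - h x - inner ℝ (gradient h x) v
      = ∫ t in (0:ℝ)..1, ((inner ℝ (gradient h (x + t • v)) v : ℝ)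
          - inner ℝ (gradient h x) v) := by
    rw [intervalIntegral.integral_sub (hcont.intervalIntegrable 0 1)
      (intervalIntegrable_const), key]
    simp
  rw [hsub, ← Real.norm_eq_abs]
  have hb : ∀ t ∈ Set.uIoc (0:ℝ) 1,
      ‖(inner ℝ (gradient h (x + t • v)) v : ℝ) - inner ℝ (gradient h x) v‖
        ≤ L * ‖v‖ ^ 2 * t := by
    intro t ht
    rw [Set.uIoc_of_le zero_le_one] at ht
    have h0 : (0:ℝ) < t := ht.1
    rw [← inner_sub_left]
    calc ‖(inner ℝ (gradient h (x + t • v) - gradient h x) v : ℝ)‖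
        ≤ ‖gradient h (x + t • v) - gradient h x‖ * ‖v‖ := norm_inner_le_norm _ _
      _ ≤ (L * ‖(x + t • v) - x‖) * ‖v‖ :=
          mul_le_mul_of_nonneg_right (hsmooth _ _) (norm_nonneg _)
      _ = L * ‖v‖ ^ 2 * t := by
          simp [norm_smul, abs_of_pos h0]; ring
  have := intervalIntegral.norm_integral_le_of_norm_le
    (μ := MeasureTheory.volume) (a := 0) (b := 1)
    zero_le_one (Filter.Eventually.of_forall fun t ht => hb t (by rw [Set.uIoc_of_le zero_le_one]; exact ht))
    (by apply Continuous.intervalIntegrable; continuity)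
  refine this.trans (le_of_eq ?_)
  rw [intervalIntegral.integral_const_mul, integral_id]; ring

lemma est {d : ℕ} {L : ℝ} {h : EuclideanSpace ℝ (Fin d) → ℝ}
    (hdiff : Differentiable ℝ h)
    (hsmooth : ∀ x y, ‖gradient h x - gradient h y‖ ≤ L * ‖x - y‖)
    (x : EuclideanSpace ℝ (Fin d)) (l : Fin d) {u : ℝ} (hu : 0 < u) :
    |(h (x + u • EuclideanSpace.single l (1:ℝ))
        - h (x - u • EuclideanSpace.single l (1:ℝ))) / (2 * u)
      - gradient h x l| ≤ L * u / 2 := by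
  set e := EuclideanSpace.single l (1:ℝ) with he
  have hne : ‖e‖ = 1 := by simp [he, EuclideanSpace.norm_single]
  have hinner : (inner ℝ (gradient h x) e : ℝ) = gradient h x l := by
    rw [he, EuclideanSpace.inner_single_right]; simp
  have hA := quad_bound hdiff hsmooth x (u • e)
  have hB := quad_bound hdiff hsmooth x ((-u) • e)
  rw [real_inner_smul_right, hinner, norm_smul, hne] at hA hB
  rw [neg_smul, ← sub_eq_add_neg] at hB
  have hA' : |h (x + u • e) - h x - u * gradient h x l| ≤ L / 2 * u ^ 2 := by
    calc |h (x + u • e) - h x - u * gradient h x l| ≤ L / 2 * (‖u‖ * 1) ^ 2 := hA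
      _ = L / 2 * u ^ 2 := by rw [Real.norm_eq_abs]; rw [abs_of_pos hu]; ring
  have hB' : |h (x - u • e) - h x + u * gradient h x l| ≤ L / 2 * u ^ 2 := by
    calc |h (x - u • e) - h x + u * gradient h x l|
        = |h (x - u • e) - h x - -u * gradient h x l| := by ring_nf
      _ ≤ L / 2 * (‖-u‖ * 1) ^ 2 := hB
      _ = L / 2 * u ^ 2 := by rw [Real.norm_eq_abs, abs_neg, abs_of_pos hu]; ring
  have h2u : (0:ℝ) < 2 * u := by linarith
  have key : (h (x + u • e) - h (x - u • e)) / (2 * u) - gradient h x l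
      = ((h (x + u • e) - h x - u * gradient h x l)
          - (h (x - u • e) - h x + u * gradient h x l)) / (2 * u) := by
    field_simp; ring
  rw [key, abs_div, abs_of_pos h2u, div_le_iff₀ h2u]
  calc |(h (x + u • e) - h x - u * gradient h x l)
          - (h (x - u • e) - h x + u * gradient h x l)|
      ≤ |h (x + u • e) - h x - u * gradient h x l|
        + |h (x - u • e) - h x + u * gradient h x l| := abs_sub _ _
    _ ≤ L / 2 * u ^ 2 + L / 2 * u ^ 2 := add_le_add hA' hB'
    _ = L * u / 2 * (2 * u) := by ring

set_option maxHeartbeats 1600000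

lemma sum_single_apply (d : ℕ) (c : Fin d → ℝ) (k : Fin d) :
    (∑ l, c l • EuclideanSpace.single l (1:ℝ)) k = c k := by
  have : ∀ (s : Finset (Fin d)), (∑ l ∈ s, c l • EuclideanSpace.single l (1:ℝ)) k
      = ∑ l ∈ s, c l * (if k = l then 1 else 0) := by
    intro s
    induction s using Finset.induction with
    | empty => rfl
    | @insert i s hi ih =>
        rw [Finset.sum_insert hi, Finset.sum_insert hi, ← ih, PiLp.add_apply,
          PiLp.smul_apply, EuclideanSpace.single_apply, smul_eq_mul]
  rw [this]
  simp [Finset.sum_ite_eq]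


/-- variance bound for the variance-reduced estimator, Lemma 1 of the paper.
For `L`-smooth `h`, any `x, x̃, y` and `0 < u ≤ ũ`, with
`g(l) = G_h^{(c)}(x,u,l) − G_h^{(c)}(x̃,ũ,l) + G_h^{(2d)}(x̃,ũ)`:
`(1/d) Σ_l ‖g(l) − ∇h(x)‖² ≤ 12dL²‖x−y‖² + 12dL²‖x̃−y‖² + (7/2)ũ²L²d²`. -/
theorem stmt4 (d : ℕ) (L : ℝ) (h : EuclideanSpace ℝ (Fin d) → ℝ)
    (hdiff : Differentiable ℝ h)
    (hsmooth : ∀ x y, ‖gradient h x - gradient h y‖ ≤ L * ‖x - y‖)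
    (x xt y : EuclideanSpace ℝ (Fin d)) (u ut : ℝ) (hu : 0 < u) (huut : u ≤ ut) :
    (1 / (d : ℝ)) * ∑ l : Fin d,
        ‖Gc d h x u l - Gc d h xt ut l + G2d d h xt ut - gradient h x‖ ^ 2
      ≤ 12 * (d : ℝ) * L ^ 2 * ‖x - y‖ ^ 2 + 12 * (d : ℝ) * L ^ 2 * ‖xt - y‖ ^ 2
        + (7 / 2) * ut ^ 2 * L ^ 2 * (d : ℝ) ^ 2 := by
  rcases Nat.eq_zero_or_pos d with hd | hd
  · subst hd; simp
  have hd1 : (1:ℝ) ≤ (d:ℝ) := by exact_mod_cast hd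
  have hdpos : (0:ℝ) < (d:ℝ) := by linarith
  have hut : 0 < ut := lt_of_lt_of_le hu huut
  -- L is nonnegative
  have hL : 0 ≤ L := by
    have h1 := hsmooth (EuclideanSpace.single ⟨0, hd⟩ (1:ℝ)) 0
    have h2 : ‖(EuclideanSpace.single (⟨0, hd⟩ : Fin d) (1:ℝ)) - 0‖ = 1 := by
      simp [EuclideanSpace.norm_single]
    rw [h2, mul_one] at h1
    exact le_trans (norm_nonneg _) h1
  set a : Fin d → ℝ := fun l => (h (x + u • EuclideanSpace.single l (1:ℝ))
      - h (x - u • EuclideanSpace.single l (1:ℝ))) / (2 * u) with ha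
  set b : Fin d → ℝ := fun l => (h (xt + ut • EuclideanSpace.single l (1:ℝ))
      - h (xt - ut • EuclideanSpace.single l (1:ℝ))) / (2 * ut) with hb
  set γ : Fin d → ℝ := fun k => gradient h x k with hγ
  set γt : Fin d → ℝ := fun k => gradient h xt k with hγt
  have hα : ∀ l, |a l - γ l| ≤ L * ut / 2 := by
    intro l
    refine (est hdiff hsmooth x l hu).trans ?_
    have : L * u ≤ L * ut := mul_le_mul_of_nonneg_left huut hL
    linarith
  have hβ : ∀ l, |b l - γt l| ≤ L * ut / 2 := fun l => est hdiff hsmooth xt l hut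
  -- coordinates of the estimator vector
  have hG2d : ∀ k, (G2d d h xt ut) k = b k := by
    intro k
    have hg : G2d d h xt ut = ∑ l, b l • EuclideanSpace.single l (1:ℝ) := by
      simp only [G2d, hb]
    rw [hg, sum_single_apply]
  have hGcx : ∀ l k, (Gc d h x u l) k = ((d:ℝ) * a l) * (if k = l then 1 else 0) := by
    intro l k
    simp only [Gc, PiLp.smul_apply, smul_eq_mul, EuclideanSpace.single_apply, ha]
  have hGcxt : ∀ l k, (Gc d h xt ut l) k = ((d:ℝ) * b l) * (if k = l then 1 else 0) := by
    intro l k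
    simp only [Gc, PiLp.smul_apply, smul_eq_mul, EuclideanSpace.single_apply, hb]
  have hcoord : ∀ l k : Fin d,
      (Gc d h x u l - Gc d h xt ut l + G2d d h xt ut - gradient h x) k
        = (if k = l then (d:ℝ) * a l - (d:ℝ) * b l else 0) + (b k - γ k) := by
    intro l k
    rw [PiLp.sub_apply, PiLp.add_apply, PiLp.sub_apply, hGcx, hGcxt, hG2d]
    by_cases hk : k = l <;> simp [hk, hγ] <;> ring
  -- square-norm as coordinate sum
  have hnorm : ∀ w : EuclideanSpace ℝ (Fin d), ‖w‖ ^ 2 = ∑ k, (w k) ^ 2 := by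
    intro w
    rw [EuclideanSpace.norm_eq, Real.sq_sqrt (by positivity)]
    simp [sq_abs]
  set SQ := ∑ k, (b k - γ k) ^ 2 with hSQdef
  set Sα := ∑ l, (a l - γ l) ^ 2 with hSαdef
  set G := ∑ k, (γt k - γ k) ^ 2 with hGdef
  set SP := ∑ l, ((d:ℝ) * a l - (d:ℝ) * b l + (b l - γ l)) ^ 2 with hSPdef
  have hsum : ∀ l, ‖Gc d h x u l - Gc d h xt ut l + G2d d h xt ut - gradient h x‖ ^ 2
      = SQ + (((d:ℝ) * a l - (d:ℝ) * b l + (b l - γ l)) ^ 2 - (b l - γ l) ^ 2) := by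
    intro l
    rw [hnorm, Finset.sum_congr rfl fun k _ => by rw [hcoord l k]]
    have hterm : ∀ k : Fin d,
        ((if k = l then (d:ℝ) * a l - (d:ℝ) * b l else 0) + (b k - γ k)) ^ 2
          = (b k - γ k) ^ 2 + (if k = l
              then ((d:ℝ) * a l - (d:ℝ) * b l + (b l - γ l)) ^ 2 - (b l - γ l) ^ 2
              else 0) := by
      intro k
      by_cases hk : k = l
      · subst hk; simp; try ring
      · simp [hk]
    rw [Finset.sum_congr rfl fun k _ => hterm k, Finset.sum_add_distrib]
    simp only [Finset.sum_ite_eq', Finset.mem_univ, if_true]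
    try rw [hSQdef]
  have htot : ∑ l : Fin d,
      ‖Gc d h x u l - Gc d h xt ut l + G2d d h xt ut - gradient h x‖ ^ 2
        = (d:ℝ) * SQ + SP - SQ := by
    rw [Finset.sum_congr rfl fun l _ => hsum l, Finset.sum_add_distrib,
      Finset.sum_sub_distrib, Finset.sum_const, Finset.card_univ, Fintype.card_fin,
      nsmul_eq_mul, ← hSPdef, ← hSQdef]
    ring
  -- bounds on the scalar sums
  have hSQ0 : 0 ≤ SQ := Finset.sum_nonneg fun k _ => sq_nonneg _
  have hSα0 : 0 ≤ Sα := Finset.sum_nonneg fun k _ => sq_nonneg _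
  have hG0 : 0 ≤ G := Finset.sum_nonneg fun k _ => sq_nonneg _
  have hSα : Sα ≤ (d:ℝ) * (L * ut / 2) ^ 2 := by
    calc Sα ≤ ∑ _l : Fin d, (L * ut / 2) ^ 2 := by
          refine Finset.sum_le_sum fun l _ => ?_
          have h1 := hα l
          nlinarith [sq_abs (a l - γ l), mul_self_le_mul_self (abs_nonneg (a l - γ l)) h1]
      _ = (d:ℝ) * (L * ut / 2) ^ 2 := by
          rw [Finset.sum_const, Finset.card_univ, Fintype.card_fin, nsmul_eq_mul]
  have hGnorm : G = ‖gradient h xt - gradient h x‖ ^ 2 := by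
    rw [hnorm]
    exact (Finset.sum_congr rfl fun k _ => by simp [hγ, hγt, PiLp.sub_apply]).symm
  have hG : G ≤ 2 * L ^ 2 * ‖x - y‖ ^ 2 + 2 * L ^ 2 * ‖xt - y‖ ^ 2 := by
    have h2 := hsmooth xt x
    have h3 : ‖xt - x‖ ≤ ‖xt - y‖ + ‖x - y‖ := by
      have hxy : xt - x = (xt - y) - (x - y) := by abel
      rw [hxy]; exact norm_sub_le _ _
    rw [hGnorm]
    nlinarith [norm_nonneg (xt - y), norm_nonneg (x - y), norm_nonneg (xt - x),
      norm_nonneg (gradient h xt - gradient h x),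
      mul_self_le_mul_self (norm_nonneg (gradient h xt - gradient h x)) h2,
      mul_le_mul_of_nonneg_left h3 hL,
      mul_self_le_mul_self (norm_nonneg (xt - x)) h3, sq_nonneg (‖xt - y‖ - ‖x - y‖)]
  have hSQ : SQ ≤ (d:ℝ) * (L * ut / 2) ^ 2 * 2 + 2 * G := by
    have hterm : ∀ k, (b k - γ k) ^ 2 ≤ 2 * (L * ut / 2) ^ 2 + 2 * (γt k - γ k) ^ 2 := by
      intro k
      have h1 := hβ k
      have h3 : (b k - γt k) ^ 2 ≤ (L * ut / 2) ^ 2 := by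
        nlinarith [sq_abs (b k - γt k), mul_self_le_mul_self (abs_nonneg (b k - γt k)) h1]
      nlinarith [sq_nonneg ((b k - γt k) - (γt k - γ k))]
    calc SQ ≤ ∑ k, (2 * (L * ut / 2) ^ 2 + 2 * (γt k - γ k) ^ 2) :=
          Finset.sum_le_sum fun k _ => hterm k
      _ = (d:ℝ) * (L * ut / 2) ^ 2 * 2 + 2 * G := by
          rw [Finset.sum_add_distrib, Finset.sum_const, Finset.card_univ, Fintype.card_fin,
            nsmul_eq_mul, ← Finset.mul_sum, ← hGdef]
          ring
  have hSP : SP ≤ 2 * (d:ℝ) ^ 2 * Sα + 2 * ((d:ℝ) - 1) ^ 2 * SQ := by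
    have hterm : ∀ l, ((d:ℝ) * a l - (d:ℝ) * b l + (b l - γ l)) ^ 2
        ≤ 2 * (d:ℝ) ^ 2 * (a l - γ l) ^ 2 + 2 * ((d:ℝ) - 1) ^ 2 * (b l - γ l) ^ 2 := by
      intro l
      nlinarith [sq_nonneg ((d:ℝ) * (a l - γ l) + ((d:ℝ) - 1) * (b l - γ l))]
    calc SP ≤ ∑ l, (2 * (d:ℝ) ^ 2 * (a l - γ l) ^ 2 + 2 * ((d:ℝ) - 1) ^ 2 * (b l - γ l) ^ 2) :=
          Finset.sum_le_sum fun l _ => hterm l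
      _ = 2 * (d:ℝ) ^ 2 * Sα + 2 * ((d:ℝ) - 1) ^ 2 * SQ := by
          rw [Finset.sum_add_distrib, ← Finset.mul_sum, ← Finset.mul_sum, ← hSαdef, ← hSQdef]
  -- final assembly
  rw [htot, one_div_mul_eq_div, div_le_iff₀ hdpos]
  have p1 : 2 * (d:ℝ) ^ 2 * Sα ≤ 2 * (d:ℝ) ^ 2 * ((d:ℝ) * (L * ut / 2) ^ 2) :=
    mul_le_mul_of_nonneg_left hSα (by positivity)
  have p2 : (2 * ((d:ℝ) - 1) ^ 2 + ((d:ℝ) - 1)) * SQ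
      ≤ 2 * (d:ℝ) ^ 2 * ((d:ℝ) * (L * ut / 2) ^ 2 * 2 + 2 * G) :=
    mul_le_mul (by nlinarith) hSQ hSQ0 (by positivity)
  have p3 : 4 * (d:ℝ) ^ 2 * G
      ≤ 4 * (d:ℝ) ^ 2 * (2 * L ^ 2 * ‖x - y‖ ^ 2 + 2 * L ^ 2 * ‖xt - y‖ ^ 2) :=
    mul_le_mul_of_nonneg_left hG (by positivity)
  have q1 : (0:ℝ) ≤ (d:ℝ) ^ 2 * (L ^ 2 * ‖x - y‖ ^ 2) := by positivity
  have q2 : (0:ℝ) ≤ (d:ℝ) ^ 2 * (L ^ 2 * ‖xt - y‖ ^ 2) := by positivity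
  have q3 : (0:ℝ) ≤ (d:ℝ) ^ 2 * ((d:ℝ) * (L ^ 2 * ut ^ 2)) := by positivity
  nlinarith [hSP, p1, p2, p3, q1, q2, q3, hSQ0, hSα0, hG0, hd1]
end
end

section
/- Let d ≥ 3 be an integer, σ ∈ [0,1), and α, L > 0 with αL ≤ (1−σ²)³/(12·√29·d^{5/2}). Define the 3×3 real matrix A with rows [ (1+2σ²)/3, 0, 9·√29·√d·αL/(1−σ²) ], [ 17·√d·αL + (1+2σ²)/3, 1 − (1−σ²)/d, 9·√29·√d·αL/(1−σ²) ], [ 9·√29·√d·αL/(1−σ²), 3·√29·√d·αL/(1−σ²), (2+σ²)/3 ], and let π = ((1−σ²)/d, 3, 1). Then (A·π)_i ≤ (1 − (1−σ²)/(2d))·π_i for i = 1,2,3; consequently the matrix norm of A induced by the weighted norm ‖x‖_∞^π = max_i |x_i|/π_i is at most 1 − (1−σ²)/(2d), and every complex eigenvalue λ of A satisfies |λ| ≤ 1 − (1−σ²)/(2d) (i.e. the spectral radius ρ(A) ≤ 1 − (1−σ²)/(2d)). -/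
noncomputable section

lemma auxRow1 (σ c D sd s29 : ℝ) (hD : 3 ≤ D) (hε : 0 < 1 - σ^2) (hε1 : 1 - σ^2 ≤ 1)
    (hc : 0 < c) (hsd : 1 ≤ sd) (h295 : 5 ≤ s29)
    (hq : 12 * D^2 * (s29 * sd * c) ≤ (1-σ^2)^3) :
    (1 + 2 * σ ^ 2) / 3 * ((1 - σ ^ 2) / D) + 9 * s29 * sd * c / (1 - σ ^ 2) ≤
      (1 - (1 - σ ^ 2) / (2 * D)) * ((1 - σ ^ 2) / D) := by
  have hD0 : (0:ℝ) < D := by linarith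
  rw [← sub_nonneg]
  field_simp
  nlinarith [mul_le_mul_of_nonneg_left hq hD0.le, mul_pos hD0 (pow_pos hε 3),
    mul_nonneg (mul_pos hD0 (pow_pos hε 3)).le (by linarith : (0:ℝ) ≤ D - 3)]

lemma auxRow2 (σ c D sd s29 : ℝ) (hD : 3 ≤ D) (hε : 0 < 1 - σ^2) (hε1 : 1 - σ^2 ≤ 1)
    (hc : 0 < c) (hsd : 1 ≤ sd) (h295 : 5 ≤ s29)
    (hq : 12 * D^2 * (s29 * sd * c) ≤ (1-σ^2)^3) :
    (17 * sd * c + (1 + 2 * σ ^ 2) / 3) * ((1 - σ ^ 2) / D) + (1 - (1 - σ ^ 2) / D) * 3 +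
      9 * s29 * sd * c / (1 - σ ^ 2) ≤ (1 - (1 - σ ^ 2) / (2 * D)) * 3 := by
  have hD0 : (0:ℝ) < D := by linarith
  have hsdc : 5 * (sd*c) ≤ s29 * sd * c := by nlinarith [mul_pos (by linarith : (0:ℝ) < sd) hc]
  have ht : (0:ℝ) < s29 * sd * c :=
    mul_pos (mul_pos (by linarith) (by linarith)) hc
  rw [← sub_nonneg]
  field_simp
  nlinarith [mul_le_mul_of_nonneg_left hsdc (by positivity : (0:ℝ) ≤ D^2 * (1-σ^2)^2),
    mul_le_mul_of_nonneg_left hq (by positivity : (0:ℝ) ≤ (1-σ^2)^2),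
    pow_le_pow_of_le_one hε.le hε1 (by norm_num : 2 ≤ 5),
    mul_le_mul_of_nonneg_left hq hD0.le,
    mul_le_mul_of_nonneg_left (pow_le_pow_of_le_one hε.le hε1 (by norm_num : 2 ≤ 3)) hD0.le,
    mul_nonneg (mul_nonneg hD0.le (sq_nonneg (1-σ^2))) (by linarith : (0:ℝ) ≤ D - 3),
    mul_nonneg (sq_nonneg (1-σ^2)) (by linarith : (0:ℝ) ≤ D - 3),
    ht, pow_pos hε 3, mul_pos hD0 hD0]

lemma auxRow3 (σ c D sd s29 : ℝ) (hD : 3 ≤ D) (hε : 0 < 1 - σ^2) (hε1 : 1 - σ^2 ≤ 1)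
    (hc : 0 < c) (hsd : 1 ≤ sd) (h295 : 5 ≤ s29)
    (hq : 12 * D^2 * (s29 * sd * c) ≤ (1-σ^2)^3) :
    9 * s29 * sd * c / (1 - σ ^ 2) * ((1 - σ ^ 2) / D) + 3 * s29 * sd * c / (1 - σ ^ 2) * 3 +
      (2 + σ ^ 2) / 3 ≤ 1 - (1 - σ ^ 2) / (2 * D) := by
  have hD0 : (0:ℝ) < D := by linarith
  have ht : (0:ℝ) < s29 * sd * c :=
    mul_pos (mul_pos (by linarith) (by linarith)) hc
  rw [← sub_nonneg]
  field_simp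
  nlinarith [hq, pow_le_pow_of_le_one hε.le hε1 (by norm_num : 2 ≤ 3),
    mul_nonneg ht.le (mul_nonneg hD0.le (by linarith : (0:ℝ) ≤ D - (1-σ^2))),
    mul_nonneg (mul_nonneg hD0.le (sq_nonneg (1-σ^2))) (by linarith : (0:ℝ) ≤ D - 3),
    mul_nonneg (sq_nonneg (1-σ^2)) (by linarith : (0:ℝ) ≤ D - 3)]

lemma aux_norm' {ι : Type*} [Fintype ι] [Nonempty ι] (A : Matrix ι ι ℝ) (p : ι → ℝ) (r : ℝ)
    (hA : ∀ i j, 0 ≤ A i j) (hp : ∀ i, 0 < p i) (h : ∀ i, A.mulVec p i ≤ r * p i)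
    (x : ι → ℝ) :
    (⨆ i, |A.mulVec x i| / p i) ≤ r * ⨆ i, |x i| / p i := by
  set M := ⨆ i, |x i| / p i with hM
  have hbdd : BddAbove (Set.range fun i => |x i| / p i) := Set.Finite.bddAbove (Set.finite_range _)
  have hMle : ∀ j, |x j| ≤ M * p j := by
    intro j
    have := le_ciSup hbdd j
    rw [div_le_iff₀ (hp j)] at this
    linarith [this]
  have hM0 : 0 ≤ M :=
    le_trans (div_nonneg (abs_nonneg _) (hp _).le) (le_ciSup hbdd (Classical.arbitrary ι))
  apply ciSup_le
  intro i
  rw [div_le_iff₀ (hp i)]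
  calc |A.mulVec x i| = |∑ j, A i j * x j| := by rfl
    _ ≤ ∑ j, |A i j * x j| := Finset.abs_sum_le_sum_abs _ _
    _ ≤ ∑ j, A i j * (M * p j) := by
        apply Finset.sum_le_sum
        intro j _
        rw [abs_mul, abs_of_nonneg (hA i j)]
        exact mul_le_mul_of_nonneg_left (hMle j) (hA i j)
    _ = M * A.mulVec p i := by
        simp only [Matrix.mulVec, dotProduct, Finset.mul_sum]
        exact Finset.sum_congr rfl fun j _ => by ring
    _ ≤ M * (r * p i) := mul_le_mul_of_nonneg_left (h i) hM0
    _ = r * M * p i := by ring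

lemma aux_eig' {ι : Type*} [Fintype ι] [Nonempty ι] (A : Matrix ι ι ℝ) (p : ι → ℝ) (r : ℝ)
    (hA : ∀ i j, 0 ≤ A i j) (hp : ∀ i, 0 < p i) (h : ∀ i, A.mulVec p i ≤ r * p i)
    (lam : ℂ) (v : ι → ℂ) (hv : v ≠ 0)
    (heig : (A.map (fun a : ℝ => (a : ℂ))).mulVec v = lam • v) :
    ‖lam‖ ≤ r := by
  obtain ⟨i, hi⟩ := Finite.exists_max (fun j => ‖v j‖ / p j)
  have hvi : 0 < ‖v i‖ := by
    by_contra hcon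
    push_neg at hcon
    have hzi : ‖v i‖ = 0 :=
      le_antisymm hcon (norm_nonneg _)
    apply hv
    funext j
    have h2 := hi j
    rw [hzi, zero_div, div_le_iff₀ (hp j)] at h2
    have h3 : ‖v j‖ ≤ 0 := by linarith
    simpa using le_antisymm h3 (norm_nonneg _)
  have key : ‖lam‖ * ‖v i‖ ≤ r * ‖v i‖ := by
    have h1 : ‖lam * v i‖ = ‖(A.map (fun a : ℝ => (a : ℂ))).mulVec v i‖ := by
      rw [heig]; simp [Pi.smul_apply, smul_eq_mul]
    calc ‖lam‖ * ‖v i‖ = ‖lam * v i‖ := (norm_mul _ _).symm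
      _ = ‖∑ j, (A i j : ℂ) * v j‖ := by
          rw [h1]; simp [Matrix.mulVec, dotProduct, Matrix.map_apply]
      _ ≤ ∑ j, ‖(A i j : ℂ) * v j‖ := norm_sum_le _ _
      _ = ∑ j, A i j * ‖v j‖ := by
          refine Finset.sum_congr rfl fun j _ => ?_
          rw [norm_mul, Complex.norm_real, Real.norm_eq_abs, abs_of_nonneg (hA i j)]
      _ ≤ ∑ j, A i j * (‖v i‖ / p i * p j) := by
          refine Finset.sum_le_sum fun j _ => ?_
          refine mul_le_mul_of_nonneg_left ?_ (hA i j)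
          rw [← div_le_iff₀ (hp j)] at *
          exact hi j
      _ = (‖v i‖ / p i) * A.mulVec p i := by
          simp only [Matrix.mulVec, dotProduct, Finset.mul_sum]
          exact Finset.sum_congr rfl fun j _ => by ring
      _ ≤ (‖v i‖ / p i) * (r * p i) :=
          mul_le_mul_of_nonneg_left (h i) (div_nonneg (norm_nonneg _) (hp i).le)
      _ = r * ‖v i‖ := by field_simp [(hp i).ne']
  exact le_of_mul_le_mul_right key hvi

set_option maxHeartbeats 1000000 in
/-- Lemma 4 of the paper. For `d ≥ 3`, `σ ∈ [0,1)`, `α, L > 0` with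
`αL ≤ (1−σ²)³/(12·√29·d^{5/2})`, the matrix `A` satisfies `(Aπ)_i ≤ (1 − (1−σ²)/(2d)) π_i`
for `π = ((1−σ²)/d, 3, 1)`; consequently the induced weighted-∞ matrix norm of `A` is at most
`1 − (1−σ²)/(2d)`, and every complex eigenvalue of `A` has modulus at most `1 − (1−σ²)/(2d)`. -/
theorem stmt7 (d : ℕ) (hd : 3 ≤ d) (σ α L : ℝ) (hσ0 : 0 ≤ σ) (hσ1 : σ < 1)
    (hα : 0 < α) (hL : 0 < L)
    (hstep : α * L ≤ (1 - σ ^ 2) ^ 3 / (12 * Real.sqrt 29 * (d : ℝ) ^ ((5 : ℝ) / 2))) :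
    let A : Matrix (Fin 3) (Fin 3) ℝ :=
      !![(1 + 2 * σ ^ 2) / 3, 0, 9 * Real.sqrt 29 * Real.sqrt d * (α * L) / (1 - σ ^ 2);
         17 * Real.sqrt d * (α * L) + (1 + 2 * σ ^ 2) / 3, 1 - (1 - σ ^ 2) / d,
           9 * Real.sqrt 29 * Real.sqrt d * (α * L) / (1 - σ ^ 2);
         9 * Real.sqrt 29 * Real.sqrt d * (α * L) / (1 - σ ^ 2),
           3 * Real.sqrt 29 * Real.sqrt d * (α * L) / (1 - σ ^ 2), (2 + σ ^ 2) / 3]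
    let π : Fin 3 → ℝ := ![(1 - σ ^ 2) / d, 3, 1]
    (∀ i, A.mulVec π i ≤ (1 - (1 - σ ^ 2) / (2 * d)) * π i) ∧
    (∀ x : Fin 3 → ℝ,
      (⨆ i, |A.mulVec x i| / π i) ≤ (1 - (1 - σ ^ 2) / (2 * d)) * ⨆ i, |x i| / π i) ∧
    (∀ (lam : ℂ) (v : Fin 3 → ℂ), v ≠ 0 →
      (A.map (fun a : ℝ => (a : ℂ))).mulVec v = lam • v →
        ‖lam‖ ≤ 1 - (1 - σ ^ 2) / (2 * d)) := by
  intro A π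
  have hσ2 : σ ^ 2 < 1 := by nlinarith
  have hε : (0:ℝ) < 1 - σ ^ 2 := by linarith
  have hε1 : (1:ℝ) - σ ^ 2 ≤ 1 := by nlinarith [sq_nonneg σ]
  have hD : (3:ℝ) ≤ (d:ℝ) := by exact_mod_cast hd
  have hD0 : (0:ℝ) < (d:ℝ) := by linarith
  have hc : 0 < α * L := mul_pos hα hL
  have hsd : (1:ℝ) ≤ Real.sqrt d := by
    rw [show (1:ℝ) = Real.sqrt 1 by simp]
    exact Real.sqrt_le_sqrt (by exact_mod_cast Nat.one_le_iff_ne_zero.mpr (by omega))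
  have h295 : (5:ℝ) ≤ Real.sqrt 29 := by
    rw [show (5:ℝ) = Real.sqrt 25 by
      rw [show (25:ℝ) = 5 ^ 2 by norm_num, Real.sqrt_sq]; norm_num]
    exact Real.sqrt_le_sqrt (by norm_num)
  have hrpow : ((d:ℝ)) ^ ((5:ℝ)/2) = (d:ℝ) ^ 2 * Real.sqrt d := by
    rw [show ((5:ℝ)/2) = (2:ℝ) + 1/2 by norm_num, Real.rpow_add hD0, ← Real.sqrt_eq_rpow]
    norm_num [Real.rpow_two]
  have hden : (0:ℝ) < 12 * Real.sqrt 29 * ((d:ℝ)) ^ ((5:ℝ)/2) := by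
    rw [hrpow]
    have : (0:ℝ) < Real.sqrt 29 := by linarith
    positivity
  have hq : 12 * (d:ℝ) ^ 2 * (Real.sqrt 29 * Real.sqrt d * (α * L)) ≤ (1 - σ ^ 2) ^ 3 := by
    have h1 := (le_div_iff₀ hden).mp hstep
    rw [hrpow] at h1
    nlinarith [h1]
  have hp : ∀ i, 0 < π i := by
    intro i
    fin_cases i <;> simp [π]
    exact div_pos hε hD0
  have hA : ∀ i j, 0 ≤ A i j := by
    intro i j
    fin_cases i <;> fin_cases j <;> simp [A] <;>
      first
      | positivity
      | exact div_nonneg (mul_nonneg (by positivity) hc.le) hε.le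
      | exact add_nonneg (mul_nonneg (by positivity) hc.le) (by positivity)
      | (rw [div_le_one hD0]; linarith)
      | nlinarith [Real.sqrt_nonneg (29:ℝ), Real.sqrt_nonneg ((d:ℕ):ℝ), hc.le, hε.le, hD0]
  have h1 : ∀ i, A.mulVec π i ≤ (1 - (1 - σ ^ 2) / (2 * d)) * π i := by
    intro i
    fin_cases i <;>
      simp [A, π, Matrix.mulVec, dotProduct, Fin.sum_univ_three]
    · exact auxRow1 σ (α*L) (d:ℝ) (Real.sqrt d) (Real.sqrt 29) hD hε hε1 hc hsd h295 hq
    · linarith [auxRow2 σ (α*L) (d:ℝ) (Real.sqrt d) (Real.sqrt 29) hD hε hε1 hc hsd h295 hq]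
    · linarith [auxRow3 σ (α*L) (d:ℝ) (Real.sqrt d) (Real.sqrt 29) hD hε hε1 hc hsd h295 hq]
  exact ⟨h1, fun x => aux_norm' A π _ hA hp h1 x,
    fun lam v hv heig => aux_eig' A π _ hA hp h1 lam v hv heig⟩
end
end

section
/- Let f_1,…,f_N : ℝ^d → ℝ be L-smooth and set f = (1/N)·Σ_{i=1}^N f_i. Fix x_1,…,x_N, x̃_1,…,x̃_N ∈ ℝ^d, a real ũ > 0, and for each i reals u_i, ũ_i with 0 < u_i ≤ ũ_i ≤ ũ. For l = (l_1,…,l_N) ∈ {1,…,d}^N and each i, set g_i(l_i) = G_{f_i}^{(c)}(x_i, u_i, l_i) − G_{f_i}^{(c)}(x̃_i, ũ_i, l_i) + G_{f_i}^{(2d)}(x̃_i, ũ_i), and let x̄ = (1/N)·Σ_{i=1}^N x_i. Then d^{−N}·Σ_{l ∈ {1,…,d}^N} ‖(1/N)·Σ_{i=1}^N g_i(l_i)‖² ≤ 2·‖∇f(x̄)‖² + (4L²(1+12d)/N)·Σ_{i=1}^N ‖x_i − x̄‖² + (48·d·L²/N)·Σ_{i=1}^N ‖x̃_i − x̄‖²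 + 14·ũ²·L²·d². -/
noncomputable section

open Finset

/-! ### Auxiliary lemmas -/

section Aux

lemma sumA {ι κ M : Type*} [Fintype ι] [Fintype κ] [DecidableEq ι] [AddCommMonoid M]
    (i : ι) (v : κ → M) :
    ∑ l : ι → κ, v (l i) = Fintype.card ({j : ι // j ≠ i} → κ) • ∑ j, v j := by
  rw [← Equiv.sum_comp (Equiv.funSplitAt i κ).symm (fun l => v (l i))]
  simp [Fintype.sum_prod_type, Finset.sum_comm, Finset.card_univ]
  rw [Finset.smul_sum]

lemma sumB {ι κ : Type*} [Fintype ι] [Fintype κ] [DecidableEq ι] {F : Type*}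
    [NormedAddCommGroup F] [InnerProductSpace ℝ F]
    {i i' : ι} (hne : i' ≠ i) (v w : κ → F) (hv : ∑ j, v j = 0) :
    ∑ l : ι → κ, (inner ℝ (v (l i)) (w (l i')) : ℝ) = 0 := by
  rw [← Equiv.sum_comp (Equiv.funSplitAt i κ).symm
    (fun l => (inner ℝ (v (l i)) (w (l i')) : ℝ))]
  rw [Fintype.sum_prod_type]
  have : ∀ (b : κ) (g : {j : ι // j ≠ i} → κ),
      (inner ℝ (v (((Equiv.funSplitAt i κ).symm (b, g)) i))
        (w (((Equiv.funSplitAt i κ).symm (b, g)) i')) : ℝ)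
      = inner ℝ (v b) (w (g ⟨i', hne⟩)) := by
    intro b g
    simp [Equiv.funSplitAt_symm_apply, hne]
  simp_rw [this]
  rw [Finset.sum_comm]
  simp_rw [← sum_inner, hv]
  simp

variable {dd : ℕ}

/-- The symmetric finite-difference quotient. -/
def fdq (h : EuclideanSpace ℝ (Fin dd) → ℝ) (x : EuclideanSpace ℝ (Fin dd)) (u : ℝ)
    (l : Fin dd) : ℝ :=
  (h (x + u • EuclideanSpace.single l (1 : ℝ))
    - h (x - u • EuclideanSpace.single l (1 : ℝ))) / (2 * u)

lemma fderiv_apply_eq_inner (h : EuclideanSpace ℝ (Fin dd) → ℝ) (x v : EuclideanSpace ℝ (Fin dd)) :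
    fderiv ℝ h x v = (inner ℝ (gradient h x) v : ℝ) := by
  rw [gradient, InnerProductSpace.toDual_symm_apply]

lemma norm_fderiv_sub_eq (h : EuclideanSpace ℝ (Fin dd) → ℝ) (a b : EuclideanSpace ℝ (Fin dd)) :
    ‖fderiv ℝ h a - fderiv ℝ h b‖ = ‖gradient h a - gradient h b‖ := by
  rw [gradient, gradient, ← LinearIsometryEquiv.map_sub, LinearIsometryEquiv.norm_map]

lemma bias_bound {L : ℝ} (hL : 0 ≤ L) (h : EuclideanSpace ℝ (Fin dd) → ℝ)
    (hd : Differentiable ℝ h)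
    (hs : ∀ a b, ‖gradient h a - gradient h b‖ ≤ L * ‖a - b‖)
    (x : EuclideanSpace ℝ (Fin dd)) {u : ℝ} (hu : 0 < u) (l : Fin dd) :
    |fdq h x u l - gradient h x l| ≤ L * u := by
  set e : EuclideanSpace ℝ (Fin dd) := EuclideanSpace.single l (1 : ℝ) with he
  have hne : ‖e‖ = 1 := by rw [he, EuclideanSpace.norm_single, norm_one]
  set p := x - u • e with hp
  set q := x + u • e with hq
  have hsub : ∀ z ∈ segment ℝ p q, ‖z - x‖ ≤ u := by
    intro z hz
    have hball : segment ℝ p q ⊆ Metric.closedBall x u := by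
      apply (convex_closedBall x u).segment_subset
      · rw [Metric.mem_closedBall, dist_eq_norm, hp]
        have : x - u • e - x = -(u • e) := by abel
        rw [this, norm_neg, norm_smul, hne, Real.norm_eq_abs, abs_of_pos hu, mul_one]
      · rw [Metric.mem_closedBall, dist_eq_norm, hq]
        have : x + u • e - x = u • e := by abel
        rw [this, norm_smul, hne, Real.norm_eq_abs, abs_of_pos hu, mul_one]
    have := hball hz
    rwa [Metric.mem_closedBall, dist_eq_norm] at this
  have key : ‖h q - h p - (fderiv ℝ h x) (q - p)‖ ≤ (L * u) * ‖q - p‖ := by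
    apply Convex.norm_image_sub_le_of_norm_hasFDerivWithin_le'
      (f' := fun z => fderiv ℝ h z) (φ := fderiv ℝ h x)
      (fun z _ => (hd z).hasFDerivAt.hasFDerivWithinAt)
      ?_ (convex_segment p q) (left_mem_segment ℝ p q) (right_mem_segment ℝ p q)
    intro z hz
    rw [norm_fderiv_sub_eq]
    calc ‖gradient h z - gradient h x‖ ≤ L * ‖z - x‖ := hs z x
      _ ≤ L * u := by exact mul_le_mul_of_nonneg_left (hsub z hz) hL
  have hqp : q - p = (2 * u) • e := by rw [hq, hp]; module
  have hnqp : ‖q - p‖ = 2 * u := by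
    rw [hqp, norm_smul, hne, Real.norm_eq_abs, abs_of_pos (by linarith), mul_one]
  have hfder : (fderiv ℝ h x) (q - p) = 2 * u * (gradient h x l) := by
    rw [hqp, map_smul, smul_eq_mul, fderiv_apply_eq_inner, real_inner_comm,
      EuclideanSpace.inner_single_left]
    simp
  rw [hfder, hnqp] at key
  rw [Real.norm_eq_abs] at key
  have h2u : (0:ℝ) < 2 * u := by linarith
  have : fdq h x u l - gradient h x l = (h q - h p - 2 * u * gradient h x l) / (2 * u) := by
    rw [fdq, hq, hp]; field_simp; rfl
  rw [this, abs_div, abs_of_pos h2u, div_le_iff₀ h2u]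
  exact key

lemma Gc_eq (h : EuclideanSpace ℝ (Fin dd) → ℝ) (x : EuclideanSpace ℝ (Fin dd)) (u : ℝ)
    (l : Fin dd) : Gc dd h x u l = ((dd : ℝ) * fdq h x u l) • EuclideanSpace.single l (1:ℝ) := rfl

lemma G2d_apply (h : EuclideanSpace ℝ (Fin dd) → ℝ) (x : EuclideanSpace ℝ (Fin dd)) (u : ℝ)
    (j : Fin dd) : G2d dd h x u j = fdq h x u j := by
  rw [G2d]
  rw [show (∑ l : Fin dd, ((h (x + u • EuclideanSpace.single l (1 : ℝ))
      - h (x - u • EuclideanSpace.single l (1 : ℝ))) / (2 * u)) • EuclideanSpace.single l (1 : ℝ)) j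
    = ∑ l : Fin dd, (((h (x + u • EuclideanSpace.single l (1 : ℝ))
      - h (x - u • EuclideanSpace.single l (1 : ℝ))) / (2 * u)) • EuclideanSpace.single l (1 : ℝ) : EuclideanSpace ℝ (Fin dd)) j
    from by rw [WithLp.ofLp_sum, Finset.sum_apply]]
  simp [fdq, EuclideanSpace.single_apply, PiLp.smul_apply]

lemma sum_Gc (h : EuclideanSpace ℝ (Fin dd) → ℝ) (x : EuclideanSpace ℝ (Fin dd)) (u : ℝ) :
    ∑ j, Gc dd h x u j = (dd : ℝ) • G2d dd h x u := by
  rw [G2d, Finset.smul_sum]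
  refine Finset.sum_congr rfl fun j _ => ?_
  rw [Gc_eq, fdq, mul_smul]

lemma norm_sq_eq_sum (v : EuclideanSpace ℝ (Fin dd)) : ‖v‖ ^ 2 = ∑ j, (v j) ^ 2 := by
  rw [EuclideanSpace.norm_eq, Real.sq_sqrt (by positivity)]
  refine Finset.sum_congr rfl fun j _ => ?_
  rw [Real.norm_eq_abs, sq_abs]

lemma var_le {κ : Type*} [Fintype κ] {F : Type*} [NormedAddCommGroup F]
    [InnerProductSpace ℝ F] (hk : (0:ℝ) < Fintype.card κ) (v : κ → F) :
    ∑ j : κ, ‖v j - (Fintype.card κ : ℝ)⁻¹ • ∑ j' : κ, v j'‖ ^ 2 ≤ ∑ j : κ, ‖v j‖ ^ 2 := by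
  set m : F := (Fintype.card κ : ℝ)⁻¹ • ∑ j' : κ, v j' with hm
  have hsum : ∑ j' : κ, v j' = (Fintype.card κ : ℝ) • m := by
    rw [hm, smul_smul, mul_inv_cancel₀ (ne_of_gt hk), one_smul]
  have expand : ∑ j : κ, ‖v j - m‖ ^ 2
      = (∑ j : κ, ‖v j‖ ^ 2) - (Fintype.card κ : ℝ) * ‖m‖ ^ 2 := by
    have h0 : ∀ j : κ, ‖v j - m‖ ^ 2 = ‖v j‖ ^ 2 - 2 * inner ℝ (v j) m + ‖m‖ ^ 2 :=
      fun j => norm_sub_sq_real _ _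
    rw [Finset.sum_congr rfl (fun j _ => h0 j)]
    rw [Finset.sum_add_distrib, Finset.sum_sub_distrib, Finset.sum_const, Finset.card_univ,
      nsmul_eq_mul]
    rw [show (∑ j : κ, (2 : ℝ) * inner ℝ (v j) m) = 2 * inner ℝ (∑ j : κ, v j) m by
      rw [sum_inner, Finset.mul_sum], hsum]
    rw [real_inner_smul_left, real_inner_self_eq_norm_sq]
    ring
  rw [expand]
  nlinarith [norm_nonneg m, sq_nonneg ‖m‖]

lemma grad_avg {NN : ℕ} (f : Fin NN → EuclideanSpace ℝ (Fin dd) → ℝ)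
    (hdiff : ∀ i, Differentiable ℝ (f i)) (z : EuclideanSpace ℝ (Fin dd)) :
    gradient (fun y => (NN:ℝ)⁻¹ * ∑ i, f i y) z = (NN:ℝ)⁻¹ • ∑ i, gradient (f i) z := by
  have h1 : fderiv ℝ (fun y => (NN:ℝ)⁻¹ * ∑ i, f i y) z
      = (NN:ℝ)⁻¹ • ∑ i, fderiv ℝ (f i) z := by
    rw [fderiv_const_mul (by
      exact DifferentiableAt.fun_sum fun i _ => (hdiff i).differentiableAt) ((NN:ℝ)⁻¹)]
    congr 1
    exact fderiv_fun_sum fun i _ => (hdiff i).differentiableAt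
  rw [gradient, h1, map_smul, map_sum]
  rfl

lemma norm_sum_sq_eq_double {E : Type*} [NormedAddCommGroup E] [InnerProductSpace ℝ E]
    {n : ℕ} (w : Fin n → E) :
    ‖∑ i, w i‖ ^ 2 = ∑ i, ∑ i', (inner ℝ (w i) (w i') : ℝ) := by
  rw [← real_inner_self_eq_norm_sq, sum_inner]
  simp_rw [inner_sum]

/-- Bias of the `2d`-point estimator. -/
lemma G2d_bias {L : ℝ} (hL : 0 ≤ L) (h : EuclideanSpace ℝ (Fin dd) → ℝ)
    (hd : Differentiable ℝ h)
    (hs : ∀ a b, ‖gradient h a - gradient h b‖ ≤ L * ‖a - b‖)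
    (x : EuclideanSpace ℝ (Fin dd)) {u : ℝ} (hu : 0 < u) :
    ‖G2d dd h x u - gradient h x‖ ^ 2 ≤ (dd : ℝ) * (L * u) ^ 2 := by
  rw [norm_sq_eq_sum]
  calc ∑ j, ((G2d dd h x u - gradient h x) j) ^ 2
      ≤ ∑ _j : Fin dd, (L * u) ^ 2 := by
        refine Finset.sum_le_sum fun j _ => ?_
        rw [PiLp.sub_apply, G2d_apply]
        rw [← sq_abs]
        have := bias_bound hL h hd hs x hu j
        exact pow_le_pow_left₀ (abs_nonneg _) this 2
    _ = (dd : ℝ) * (L * u) ^ 2 := by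
        rw [Finset.sum_const, Finset.card_univ, Fintype.card_fin, nsmul_eq_mul]

lemma four_sq_ineq (p q r s : ℝ) : (p+q+r+s)^2 ≤ 4*(p^2+q^2+r^2+s^2) := by
  nlinarith [sq_nonneg (p-q), sq_nonneg (p-r), sq_nonneg (p-s), sq_nonneg (q-r),
    sq_nonneg (q-s), sq_nonneg (r-s)]

lemma coef1 {D L2 iN S : ℝ} (hD : 0 ≤ D) (hL2 : 0 ≤ L2) (hiN0 : 0 ≤ iN) (hiN : iN ≤ 1)
    (hS : 0 ≤ S) : 4*D*L2*iN^2*S ≤ 48*D*L2*iN*S := by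
  nlinarith [mul_nonneg (mul_nonneg (mul_nonneg (mul_nonneg hD hL2) hiN0) hS)
    (by linarith : (0:ℝ) ≤ 12 - iN)]

lemma coef3 {D L2 ut2 iN : ℝ} (hD : 1 ≤ D) (hL2 : 0 ≤ L2) (hut2 : 0 ≤ ut2) (hiN0 : 0 ≤ iN)
    (hiN : iN ≤ 1) : 4*D*L2*ut2 + 8*D^2*L2*ut2*iN ≤ 14*ut2*L2*D^2 := by
  nlinarith [mul_nonneg (mul_nonneg hL2 hut2) (mul_nonneg (by linarith : (0:ℝ) ≤ D)
      (by linarith : (0:ℝ) ≤ D - 1)),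
    mul_nonneg (mul_nonneg hL2 hut2) (mul_nonneg (mul_nonneg (by linarith : (0:ℝ) ≤ D)
      (by linarith : (0:ℝ) ≤ D)) (by linarith : (0:ℝ) ≤ 1 - iN)),
    mul_nonneg (mul_nonneg hL2 hut2) (mul_nonneg (by linarith : (0:ℝ) ≤ D)
      (by linarith : (0:ℝ) ≤ D))]

end Aux
set_option maxHeartbeats 1000000 in
/-- Averaging over all joint coordinate draws `l ∈ {1,…,d}^N`, the squared
norm of the averaged variance-reduced estimator is bounded, with `f = (1/N) Σ_i f_i`:
`d^{−N} Σ_l ‖(1/N) Σ_i g_i(l_i)‖² ≤ 2‖∇f(x̄)‖² + (4L²(1+12d)/N) Σ_i ‖x_i−x̄‖²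
  + (48dL²/N) Σ_i ‖x̃_i−x̄‖² + 14ũ²L²d²`. -/
theorem stmt15 (d N : ℕ) (L : ℝ) (f : Fin N → EuclideanSpace ℝ (Fin d) → ℝ)
    (hdiff : ∀ i, Differentiable ℝ (f i))
    (hsmooth : ∀ i x y, ‖gradient (f i) x - gradient (f i) y‖ ≤ L * ‖x - y‖)
    (x xt : Fin N → EuclideanSpace ℝ (Fin d)) (ut : ℝ) (hut : 0 < ut)
    (u' ut' : Fin N → ℝ) (hu' : ∀ i, 0 < u' i) (h1 : ∀ i, u' i ≤ ut' i)
    (h2 : ∀ i, ut' i ≤ ut) :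
    ((d : ℝ) ^ N)⁻¹ * ∑ l : Fin N → Fin d,
        ‖(N : ℝ)⁻¹ • ∑ i, (Gc d (f i) (x i) (u' i) (l i) - Gc d (f i) (xt i) (ut' i) (l i)
            + G2d d (f i) (xt i) (ut' i))‖ ^ 2
      ≤ 2 * ‖gradient (fun y => (N : ℝ)⁻¹ * ∑ i, f i y) ((N : ℝ)⁻¹ • ∑ m, x m)‖ ^ 2
        + (4 * L ^ 2 * (1 + 12 * (d : ℝ)) / N) * ∑ i, ‖x i - (N : ℝ)⁻¹ • ∑ m, x m‖ ^ 2
        + (48 * (d : ℝ) * L ^ 2 / N) * ∑ i, ‖xt i - (N : ℝ)⁻¹ • ∑ m, x m‖ ^ 2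
        + 14 * ut ^ 2 * L ^ 2 * (d : ℝ) ^ 2 := by
  rcases Nat.eq_zero_or_pos N with hN0 | hNpos
  · subst hN0
    simp only [Finset.univ_eq_empty, Finset.sum_empty, smul_zero, norm_zero, pow_two,
      mul_zero, zero_mul, Finset.sum_const, Nat.cast_zero]
    nlinarith [mul_self_nonneg (ut * L * (d:ℝ)),
      mul_self_nonneg ‖gradient (fun _ : EuclideanSpace ℝ (Fin d) => (0:ℝ))
        (0 : EuclideanSpace ℝ (Fin d))‖]
  rcases Nat.eq_zero_or_pos d with hd0 | hdpos
  · subst hd0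
    have hz : ((0:ℝ) ^ N)⁻¹ = 0 := by
      rw [zero_pow (Nat.pos_iff_ne_zero.mp hNpos), inv_zero]
    simp only [Nat.cast_zero, hz, zero_mul]
    positivity
  -- main case
  have hdR : (0:ℝ) < (d:ℝ) := by exact_mod_cast hdpos
  have hNR : (0:ℝ) < (N:ℝ) := by exact_mod_cast hNpos
  have hd1 : (1:ℝ) ≤ (d:ℝ) := by exact_mod_cast hdpos
  have hN1 : (1:ℝ) ≤ (N:ℝ) := by exact_mod_cast hNpos
  have hL : 0 ≤ L := by
    have h0 := hsmooth ⟨0, hNpos⟩ (EuclideanSpace.single ⟨0, hdpos⟩ (1:ℝ)) 0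
    rw [sub_zero, EuclideanSpace.norm_single, norm_one, mul_one] at h0
    exact le_trans (norm_nonneg _) h0
  set xb : EuclideanSpace ℝ (Fin d) := (N:ℝ)⁻¹ • ∑ m, x m with hxb
  set a : Fin N → Fin d → EuclideanSpace ℝ (Fin d) :=
    fun i j => Gc d (f i) (x i) (u' i) j - Gc d (f i) (xt i) (ut' i) j with ha
  set mm : Fin N → EuclideanSpace ℝ (Fin d) := fun i => (d:ℝ)⁻¹ • ∑ j, a i j with hmm
  set c : Fin N → Fin d → EuclideanSpace ℝ (Fin d) := fun i j => a i j - mm i with hc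
  set gbar : EuclideanSpace ℝ (Fin d) := (N:ℝ)⁻¹ • ∑ i, G2d d (f i) (x i) (u' i) with hgbar
  have F0 : ∀ i, mm i = G2d d (f i) (x i) (u' i) - G2d d (f i) (xt i) (ut' i) := by
    intro i
    rw [hmm]
    simp only [ha]
    rw [Finset.sum_sub_distrib, sum_Gc, sum_Gc, ← smul_sub, smul_smul,
      inv_mul_cancel₀ hdR.ne', one_smul]
  have F2 : ∀ i, ∑ j, c i j = 0 := by
    intro i
    simp only [hc]
    rw [Finset.sum_sub_distrib, Finset.sum_const, Finset.card_univ, Fintype.card_fin,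
      ← Nat.cast_smul_eq_nsmul ℝ, hmm]
    simp only
    rw [smul_smul, mul_inv_cancel₀ hdR.ne', one_smul, sub_self]
  have hsummand : ∀ l : Fin N → Fin d,
      (N:ℝ)⁻¹ • ∑ i, (Gc d (f i) (x i) (u' i) (l i) - Gc d (f i) (xt i) (ut' i) (l i)
          + G2d d (f i) (xt i) (ut' i))
      = gbar + (N:ℝ)⁻¹ • ∑ i, c i (l i) := by
    intro l
    have hterm : ∀ i, Gc d (f i) (x i) (u' i) (l i) - Gc d (f i) (xt i) (ut' i) (l i)
        + G2d d (f i) (xt i) (ut' i) = c i (l i) + G2d d (f i) (x i) (u' i) := by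
      intro i
      simp only [hc, ha, F0 i]
      abel
    rw [Finset.sum_congr rfl (fun i _ => hterm i), Finset.sum_add_distrib, smul_add, hgbar,
      add_comm]
  -- cardinalities
  have cardfun : (Fintype.card (Fin N → Fin d) : ℝ) = (d:ℝ)^N := by
    rw [Fintype.card_fun, Fintype.card_fin, Fintype.card_fin]; push_cast; ring
  have cardK : ∀ i : Fin N, Fintype.card ({j : Fin N // j ≠ i} → Fin d) = d^(N-1) := by
    intro i; simp
  have Ekey : ∑ l : Fin N → Fin d, ‖gbar + (N:ℝ)⁻¹ • ∑ i, c i (l i)‖ ^ 2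
      = (d:ℝ)^N * ‖gbar‖^2
        + ((d:ℝ)^(N-1)) * ((N:ℝ)⁻¹)^2 * ∑ i, ∑ j, ‖c i j‖^2 := by
    have expand : ∀ l : Fin N → Fin d, ‖gbar + (N:ℝ)⁻¹ • ∑ i, c i (l i)‖ ^ 2
        = ‖gbar‖^2 + 2 * inner ℝ gbar ((N:ℝ)⁻¹ • ∑ i, c i (l i))
          + ‖(N:ℝ)⁻¹ • ∑ i, c i (l i)‖^2 := fun l => norm_add_sq_real _ _
    rw [Finset.sum_congr rfl fun l _ => expand l]
    rw [Finset.sum_add_distrib, Finset.sum_add_distrib]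
    have P1 : ∑ _l : Fin N → Fin d, ‖gbar‖^2 = (d:ℝ)^N * ‖gbar‖^2 := by
      rw [Finset.sum_const, Finset.card_univ, nsmul_eq_mul, cardfun]
    have P2 : ∑ l : Fin N → Fin d, 2 * (inner ℝ gbar ((N:ℝ)⁻¹ • ∑ i, c i (l i)) : ℝ) = 0 := by
      have e1 : ∀ l : Fin N → Fin d, 2 * (inner ℝ gbar ((N:ℝ)⁻¹ • ∑ i, c i (l i)) : ℝ)
          = ∑ i, 2 * (N:ℝ)⁻¹ * inner ℝ gbar (c i (l i)) := by
        intro l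
        rw [real_inner_smul_right, inner_sum, Finset.mul_sum, Finset.mul_sum]
        exact Finset.sum_congr rfl fun i _ => by ring
      rw [Finset.sum_congr rfl fun l _ => e1 l, Finset.sum_comm]
      refine Finset.sum_eq_zero fun i _ => ?_
      rw [sumA i (fun j => 2 * (N:ℝ)⁻¹ * (inner ℝ gbar (c i j) : ℝ))]
      rw [show ∑ j, 2 * (N:ℝ)⁻¹ * (inner ℝ gbar (c i j):ℝ)
          = 2 * (N:ℝ)⁻¹ * (inner ℝ gbar (∑ j, c i j) : ℝ) by
        rw [inner_sum, Finset.mul_sum]]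
      rw [F2 i, inner_zero_right, mul_zero, smul_zero]
    have P3 : ∑ l : Fin N → Fin d, ‖(N:ℝ)⁻¹ • ∑ i, c i (l i)‖^2
        = ((d:ℝ)^(N-1)) * ((N:ℝ)⁻¹)^2 * ∑ i, ∑ j, ‖c i j‖^2 := by
      have e2 : ∀ l : Fin N → Fin d, ‖(N:ℝ)⁻¹ • ∑ i, c i (l i)‖^2
          = ((N:ℝ)⁻¹)^2 * ∑ i, ∑ i', (inner ℝ (c i (l i)) (c i' (l i')) : ℝ) := by
        intro l
        rw [norm_smul, mul_pow, Real.norm_eq_abs, sq_abs, norm_sum_sq_eq_double]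
      rw [Finset.sum_congr rfl fun l _ => e2 l, ← Finset.mul_sum, Finset.sum_comm]
      have e3 : ∀ i : Fin N, ∑ l : Fin N → Fin d, ∑ i', (inner ℝ (c i (l i)) (c i' (l i')) : ℝ)
          = (d:ℝ)^(N-1) * ∑ j, ‖c i j‖^2 := by
        intro i
        rw [Finset.sum_comm]
        rw [Finset.sum_eq_single_of_mem i (Finset.mem_univ i)
          (fun i' _ hne => sumB hne (c i) (c i') (F2 i))]
        have e4 : ∀ l : Fin N → Fin d, (inner ℝ (c i (l i)) (c i (l i)) : ℝ)
            = ‖c i (l i)‖^2 := fun l => real_inner_self_eq_norm_sq _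
        rw [Finset.sum_congr rfl fun l _ => e4 l, sumA i (fun j => ‖c i j‖^2), cardK i,
          nsmul_eq_mul, Nat.cast_pow]
      rw [Finset.sum_congr rfl fun i _ => e3 i, ← Finset.mul_sum]
      ring
    rw [P1, P2, P3, add_zero]
  -- rewrite the goal LHS
  have goal_lhs : ∑ l : Fin N → Fin d,
      ‖(N:ℝ)⁻¹ • ∑ i, (Gc d (f i) (x i) (u' i) (l i) - Gc d (f i) (xt i) (ut' i) (l i)
          + G2d d (f i) (xt i) (ut' i))‖ ^ 2
      = ∑ l : Fin N → Fin d, ‖gbar + (N:ℝ)⁻¹ • ∑ i, c i (l i)‖ ^ 2 :=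
    Finset.sum_congr rfl fun l _ => by rw [hsummand l]
  rw [goal_lhs, Ekey]
  have hpow : (d:ℝ)^N = (d:ℝ) * (d:ℝ)^(N-1) := by
    conv_lhs => rw [show N = (N-1)+1 from (Nat.succ_pred_eq_of_pos hNpos).symm]
    rw [pow_succ']
  have hdn : ((d:ℝ)^(N-1)) ≠ 0 := by positivity
  have hsimp : ((d:ℝ)^N)⁻¹ * ((d:ℝ)^N * ‖gbar‖^2
      + ((d:ℝ)^(N-1)) * ((N:ℝ)⁻¹)^2 * ∑ i, ∑ j, ‖c i j‖^2)
      = ‖gbar‖^2 + (d:ℝ)⁻¹ * ((N:ℝ)⁻¹)^2 * ∑ i, ∑ j, ‖c i j‖^2 := by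
    rw [hpow]
    field_simp
  rw [hsimp]
  -- pointwise bias bounds
  have hut' : ∀ i, 0 < ut' i := fun i => lt_of_lt_of_le (hu' i) (h1 i)
  have hLut : ∀ i, L * u' i ≤ L * ut :=
    fun i => mul_le_mul_of_nonneg_left ((h1 i).trans (h2 i)) hL
  have hLut' : ∀ i, L * ut' i ≤ L * ut := fun i => mul_le_mul_of_nonneg_left (h2 i) hL
  have hp : ∀ i j, |fdq (f i) (x i) (u' i) j - gradient (f i) (x i) j| ≤ L * ut := fun i j =>
    (bias_bound hL (f i) (hdiff i) (hsmooth i) (x i) (hu' i) j).trans (hLut i)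
  have hq : ∀ i j, |fdq (f i) (xt i) (ut' i) j - gradient (f i) (xt i) j| ≤ L * ut := fun i j =>
    (bias_bound hL (f i) (hdiff i) (hsmooth i) (xt i) (hut' i) j).trans (hLut' i)
  -- per-i variance bound
  have Sbound : ∀ i, ∑ j, ‖c i j‖^2
      ≤ (d:ℝ)^2 * (4*(L^2*‖x i - xb‖^2 + L^2*‖xt i - xb‖^2 + 2*(d:ℝ)*(L*ut)^2)) := by
    intro i
    have hvar : ∑ j, ‖c i j‖^2 ≤ ∑ j, ‖a i j‖^2 := by
      have hv := var_le (κ := Fin d)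
        (by rw [Fintype.card_fin]; exact_mod_cast hdpos) (a i)
      simp only [Fintype.card_fin] at hv
      simpa [hc, hmm] using hv
    have hA : ∀ j, ‖a i j‖^2
        = (d:ℝ)^2 * (fdq (f i) (x i) (u' i) j - fdq (f i) (xt i) (ut' i) j)^2 := by
      intro j
      simp only [ha]
      rw [Gc_eq, Gc_eq, ← sub_smul, ← mul_sub, norm_smul, EuclideanSpace.norm_single, norm_one,
        mul_one, Real.norm_eq_abs, sq_abs, mul_pow]
    have hDelta : ∀ j, (fdq (f i) (x i) (u' i) j - fdq (f i) (xt i) (ut' i) j)^2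
        ≤ 4 * ((fdq (f i) (x i) (u' i) j - gradient (f i) (x i) j)^2
          + ((gradient (f i) (x i) - gradient (f i) xb) j)^2
          + ((gradient (f i) xb - gradient (f i) (xt i)) j)^2
          + (gradient (f i) (xt i) j - fdq (f i) (xt i) (ut' i) j)^2) := by
      intro j
      have e : fdq (f i) (x i) (u' i) j - fdq (f i) (xt i) (ut' i) j
          = (fdq (f i) (x i) (u' i) j - gradient (f i) (x i) j)
            + ((gradient (f i) (x i) - gradient (f i) xb) j)
            + ((gradient (f i) xb - gradient (f i) (xt i)) j)
            + (gradient (f i) (xt i) j - fdq (f i) (xt i) (ut' i) j) := by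
        rw [PiLp.sub_apply, PiLp.sub_apply]; ring
      rw [e]
      exact four_sq_ineq _ _ _ _
    have sum1 : ∑ j, (fdq (f i) (x i) (u' i) j - gradient (f i) (x i) j)^2
        ≤ (d:ℝ) * (L*ut)^2 := by
      calc ∑ j, (fdq (f i) (x i) (u' i) j - gradient (f i) (x i) j)^2
          ≤ ∑ _j : Fin d, (L*ut)^2 := Finset.sum_le_sum fun j _ => by
            rw [← sq_abs]
            exact pow_le_pow_left₀ (abs_nonneg _) (hp i j) 2
        _ = (d:ℝ) * (L*ut)^2 := by
            rw [Finset.sum_const, Finset.card_univ, Fintype.card_fin, nsmul_eq_mul]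
    have sum4 : ∑ j, (gradient (f i) (xt i) j - fdq (f i) (xt i) (ut' i) j)^2
        ≤ (d:ℝ) * (L*ut)^2 := by
      calc ∑ j, (gradient (f i) (xt i) j - fdq (f i) (xt i) (ut' i) j)^2
          ≤ ∑ _j : Fin d, (L*ut)^2 := Finset.sum_le_sum fun j _ => by
            rw [← sq_abs, abs_sub_comm]
            exact pow_le_pow_left₀ (abs_nonneg _) (hq i j) 2
        _ = (d:ℝ) * (L*ut)^2 := by
            rw [Finset.sum_const, Finset.card_univ, Fintype.card_fin, nsmul_eq_mul]
    have sum2 : ∑ j, ((gradient (f i) (x i) - gradient (f i) xb) j)^2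
        ≤ L^2 * ‖x i - xb‖^2 := by
      rw [← norm_sq_eq_sum]
      calc ‖gradient (f i) (x i) - gradient (f i) xb‖^2
          ≤ (L * ‖x i - xb‖)^2 :=
            pow_le_pow_left₀ (norm_nonneg _) (hsmooth i (x i) xb) 2
        _ = L^2 * ‖x i - xb‖^2 := by ring
    have sum3 : ∑ j, ((gradient (f i) xb - gradient (f i) (xt i)) j)^2
        ≤ L^2 * ‖xt i - xb‖^2 := by
      rw [← norm_sq_eq_sum]
      calc ‖gradient (f i) xb - gradient (f i) (xt i)‖^2
          ≤ (L * ‖xb - xt i‖)^2 :=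
            pow_le_pow_left₀ (norm_nonneg _) (hsmooth i xb (xt i)) 2
        _ = L^2 * ‖xt i - xb‖^2 := by rw [norm_sub_rev]; ring
    calc ∑ j, ‖c i j‖^2 ≤ ∑ j, ‖a i j‖^2 := hvar
      _ = (d:ℝ)^2 * ∑ j, (fdq (f i) (x i) (u' i) j - fdq (f i) (xt i) (ut' i) j)^2 := by
          rw [Finset.sum_congr rfl fun j _ => hA j, ← Finset.mul_sum]
      _ ≤ (d:ℝ)^2 * ∑ j, 4 * ((fdq (f i) (x i) (u' i) j - gradient (f i) (x i) j)^2
          + ((gradient (f i) (x i) - gradient (f i) xb) j)^2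
          + ((gradient (f i) xb - gradient (f i) (xt i)) j)^2
          + (gradient (f i) (xt i) j - fdq (f i) (xt i) (ut' i) j)^2) :=
          mul_le_mul_of_nonneg_left (Finset.sum_le_sum fun j _ => hDelta j) (by positivity)
      _ ≤ (d:ℝ)^2 * (4*(L^2*‖x i - xb‖^2 + L^2*‖xt i - xb‖^2 + 2*(d:ℝ)*(L*ut)^2)) := by
          apply mul_le_mul_of_nonneg_left _ (by positivity : (0:ℝ) ≤ (d:ℝ)^2)
          rw [← Finset.mul_sum]
          simp only [Finset.sum_add_distrib]
          linarith [sum1, sum2, sum3, sum4]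
  -- gradient term bound
  set gf : EuclideanSpace ℝ (Fin d) := gradient (fun y => (N:ℝ)⁻¹ * ∑ i, f i y) xb with hgfdef
  have hgf : gf = (N:ℝ)⁻¹ • ∑ i, gradient (f i) xb := by
    rw [hgfdef]; exact grad_avg f hdiff xb
  have hvi : ∀ i, ‖G2d d (f i) (x i) (u' i) - gradient (f i) xb‖^2
      ≤ 2*(d:ℝ)*(L*ut)^2 + 2*L^2*‖x i - xb‖^2 := by
    intro i
    have tri : ‖G2d d (f i) (x i) (u' i) - gradient (f i) xb‖
        ≤ ‖G2d d (f i) (x i) (u' i) - gradient (f i) (x i)‖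
          + ‖gradient (f i) (x i) - gradient (f i) xb‖ := by
      have e : G2d d (f i) (x i) (u' i) - gradient (f i) xb
          = (G2d d (f i) (x i) (u' i) - gradient (f i) (x i))
            + (gradient (f i) (x i) - gradient (f i) xb) := by abel
      rw [e]; exact norm_add_le _ _
    have b1 : ‖G2d d (f i) (x i) (u' i) - gradient (f i) (x i)‖^2 ≤ (d:ℝ)*(L*ut)^2 := by
      refine (G2d_bias hL (f i) (hdiff i) (hsmooth i) (x i) (hu' i)).trans ?_
      have h' : (L * u' i)^2 ≤ (L*ut)^2 :=
        pow_le_pow_left₀ (mul_nonneg hL (hu' i).le) (hLut i) 2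
      exact mul_le_mul_of_nonneg_left h' hdR.le
    have b2 : ‖gradient (f i) (x i) - gradient (f i) xb‖^2 ≤ L^2*‖x i - xb‖^2 := by
      calc ‖gradient (f i) (x i) - gradient (f i) xb‖^2 ≤ (L * ‖x i - xb‖)^2 :=
            pow_le_pow_left₀ (norm_nonneg _) (hsmooth i (x i) xb) 2
        _ = L^2*‖x i - xb‖^2 := by ring
    nlinarith [tri, b1, b2,
      sq_nonneg (‖G2d d (f i) (x i) (u' i) - gradient (f i) (x i)‖
        - ‖gradient (f i) (x i) - gradient (f i) xb‖),
      norm_nonneg (G2d d (f i) (x i) (u' i) - gradient (f i) xb),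
      norm_nonneg (G2d d (f i) (x i) (u' i) - gradient (f i) (x i)),
      norm_nonneg (gradient (f i) (x i) - gradient (f i) xb)]
  have GB : ‖gbar‖^2 ≤ 2*‖gf‖^2 + 4*(d:ℝ)*L^2*ut^2
      + 4*L^2*(N:ℝ)⁻¹*(∑ i, ‖x i - xb‖^2) := by
    have hdiffvec : gbar - gf
        = (N:ℝ)⁻¹ • ∑ i, (G2d d (f i) (x i) (u' i) - gradient (f i) xb) := by
      rw [hgbar, hgf, ← smul_sub, Finset.sum_sub_distrib]
    have hnd : ‖gbar - gf‖^2
        ≤ (N:ℝ)⁻¹ * ∑ i, ‖G2d d (f i) (x i) (u' i) - gradient (f i) xb‖^2 := by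
      rw [hdiffvec, norm_smul, Real.norm_eq_abs, abs_of_pos (inv_pos.2 hNR), mul_pow]
      have t1 : ‖∑ i, (G2d d (f i) (x i) (u' i) - gradient (f i) xb)‖^2
          ≤ (∑ i, ‖G2d d (f i) (x i) (u' i) - gradient (f i) xb‖)^2 :=
        pow_le_pow_left₀ (norm_nonneg _) (norm_sum_le _ _) 2
      have t2 : (∑ i, ‖G2d d (f i) (x i) (u' i) - gradient (f i) xb‖)^2
          ≤ (N:ℝ) * ∑ i, ‖G2d d (f i) (x i) (u' i) - gradient (f i) xb‖^2 := by
        have := sq_sum_le_card_mul_sum_sq (s := (Finset.univ : Finset (Fin N)))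
          (f := fun i => ‖G2d d (f i) (x i) (u' i) - gradient (f i) xb‖)
        simpa [Finset.card_univ] using this
      calc ((N:ℝ)⁻¹)^2 * ‖∑ i, (G2d d (f i) (x i) (u' i) - gradient (f i) xb)‖^2
          ≤ ((N:ℝ)⁻¹)^2 * ((N:ℝ) * ∑ i, ‖G2d d (f i) (x i) (u' i) - gradient (f i) xb‖^2) :=
            mul_le_mul_of_nonneg_left (t1.trans t2) (by positivity)
        _ = (N:ℝ)⁻¹ * ∑ i, ‖G2d d (f i) (x i) (u' i) - gradient (f i) xb‖^2 := by
            field_simp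
    have hsum_vi : ∑ i, ‖G2d d (f i) (x i) (u' i) - gradient (f i) xb‖^2
        ≤ (N:ℝ) * (2*(d:ℝ)*(L*ut)^2) + 2*L^2*∑ i, ‖x i - xb‖^2 := by
      calc ∑ i, ‖G2d d (f i) (x i) (u' i) - gradient (f i) xb‖^2
          ≤ ∑ i, (2*(d:ℝ)*(L*ut)^2 + 2*L^2*‖x i - xb‖^2) :=
            Finset.sum_le_sum fun i _ => hvi i
        _ = (N:ℝ) * (2*(d:ℝ)*(L*ut)^2) + 2*L^2*∑ i, ‖x i - xb‖^2 := by
            rw [Finset.sum_add_distrib, Finset.sum_const, Finset.card_univ, Fintype.card_fin,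
              nsmul_eq_mul, ← Finset.mul_sum]
    have hnd3 : ‖gbar - gf‖^2 ≤ 2*(d:ℝ)*L^2*ut^2 + 2*L^2*(N:ℝ)⁻¹*(∑ i, ‖x i - xb‖^2) := by
      have step := hnd.trans (mul_le_mul_of_nonneg_left hsum_vi (by positivity))
      have heq : (N:ℝ)⁻¹ * ((N:ℝ) * (2*(d:ℝ)*(L*ut)^2) + 2*L^2*∑ i, ‖x i - xb‖^2)
          = 2*(d:ℝ)*L^2*ut^2 + 2*L^2*(N:ℝ)⁻¹*(∑ i, ‖x i - xb‖^2) := by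
        field_simp
      exact le_of_le_of_eq step heq
    have tri2 : ‖gbar‖ ≤ ‖gf‖ + ‖gbar - gf‖ := by
      conv_lhs => rw [show gbar = gf + (gbar - gf) by abel]
      exact norm_add_le _ _
    nlinarith [mul_self_le_mul_self (norm_nonneg gbar) tri2, hnd3,
      sq_nonneg (‖gf‖ - ‖gbar - gf‖), norm_nonneg (gbar - gf), norm_nonneg gf]
  -- total second-moment bound
  have SB : (∑ i, ∑ j, ‖c i j‖^2)
      ≤ 4*(d:ℝ)^2*L^2*(∑ i, ‖x i - xb‖^2) + 4*(d:ℝ)^2*L^2*(∑ i, ‖xt i - xb‖^2)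
        + 8*(d:ℝ)^3*L^2*ut^2*(N:ℝ) := by
    calc (∑ i, ∑ j, ‖c i j‖^2)
        ≤ ∑ i, (d:ℝ)^2 * (4*(L^2*‖x i - xb‖^2 + L^2*‖xt i - xb‖^2 + 2*(d:ℝ)*(L*ut)^2)) :=
          Finset.sum_le_sum fun i _ => Sbound i
      _ = ∑ i, (4*(d:ℝ)^2*L^2*‖x i - xb‖^2 + 4*(d:ℝ)^2*L^2*‖xt i - xb‖^2
          + 8*(d:ℝ)^3*L^2*ut^2) := Finset.sum_congr rfl fun i _ => by ring
      _ = 4*(d:ℝ)^2*L^2*(∑ i, ‖x i - xb‖^2) + 4*(d:ℝ)^2*L^2*(∑ i, ‖xt i - xb‖^2)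
          + 8*(d:ℝ)^3*L^2*ut^2*(N:ℝ) := by
          rw [Finset.sum_add_distrib, Finset.sum_add_distrib, ← Finset.mul_sum, ← Finset.mul_sum,
            Finset.sum_const, Finset.card_univ, Fintype.card_fin, nsmul_eq_mul]
          ring
  -- final arithmetic
  have cs : (d:ℝ)⁻¹ * ((N:ℝ)⁻¹)^2 * (∑ i, ∑ j, ‖c i j‖^2)
      ≤ 4*(d:ℝ)*L^2*((N:ℝ)⁻¹)^2*(∑ i, ‖x i - xb‖^2)
        + 4*(d:ℝ)*L^2*((N:ℝ)⁻¹)^2*(∑ i, ‖xt i - xb‖^2)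
        + 8*(d:ℝ)^2*L^2*ut^2*(N:ℝ)⁻¹ := by
    have step := mul_le_mul_of_nonneg_left SB
      (by positivity : (0:ℝ) ≤ (d:ℝ)⁻¹ * ((N:ℝ)⁻¹)^2)
    have heq : (d:ℝ)⁻¹ * ((N:ℝ)⁻¹)^2 * (4*(d:ℝ)^2*L^2*(∑ i, ‖x i - xb‖^2)
        + 4*(d:ℝ)^2*L^2*(∑ i, ‖xt i - xb‖^2) + 8*(d:ℝ)^3*L^2*ut^2*(N:ℝ))
        = 4*(d:ℝ)*L^2*((N:ℝ)⁻¹)^2*(∑ i, ‖x i - xb‖^2)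
          + 4*(d:ℝ)*L^2*((N:ℝ)⁻¹)^2*(∑ i, ‖xt i - xb‖^2)
          + 8*(d:ℝ)^2*L^2*ut^2*(N:ℝ)⁻¹ := by
      field_simp
    exact le_of_le_of_eq step heq
  have hiN : (N:ℝ)⁻¹ ≤ 1 := by
    rw [inv_le_one_iff₀]; right; exact hN1
  have hiN0 : (0:ℝ) ≤ (N:ℝ)⁻¹ := by positivity
  have hSx0 : (0:ℝ) ≤ ∑ i, ‖x i - xb‖^2 := Finset.sum_nonneg fun i _ => by positivity
  have hSt0 : (0:ℝ) ≤ ∑ i, ‖xt i - xb‖^2 := Finset.sum_nonneg fun i _ => by positivity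
  have t1 : 4*(d:ℝ)*L^2*((N:ℝ)⁻¹)^2*(∑ i, ‖x i - xb‖^2)
      ≤ 48*(d:ℝ)*L^2*(N:ℝ)⁻¹*(∑ i, ‖x i - xb‖^2) :=
    coef1 hdR.le (sq_nonneg L) hiN0 hiN hSx0
  have t2 : 4*(d:ℝ)*L^2*((N:ℝ)⁻¹)^2*(∑ i, ‖xt i - xb‖^2)
      ≤ 48*(d:ℝ)*L^2*(N:ℝ)⁻¹*(∑ i, ‖xt i - xb‖^2) :=
    coef1 hdR.le (sq_nonneg L) hiN0 hiN hSt0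
  have t3 : 4*(d:ℝ)*L^2*ut^2 + 8*(d:ℝ)^2*L^2*ut^2*(N:ℝ)⁻¹ ≤ 14*ut^2*L^2*(d:ℝ)^2 :=
    coef3 hd1 (sq_nonneg L) (sq_nonneg ut) hiN0 hiN
  have hdivx : (4 * L ^ 2 * (1 + 12 * (d:ℝ)) / N) * (∑ i, ‖x i - xb‖^2)
      = 4*L^2*(N:ℝ)⁻¹*(∑ i, ‖x i - xb‖^2)
        + 48*(d:ℝ)*L^2*(N:ℝ)⁻¹*(∑ i, ‖x i - xb‖^2) := by
    rw [div_eq_mul_inv]; try ring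
  have hdivt : (48 * (d:ℝ) * L ^ 2 / N) * (∑ i, ‖xt i - xb‖^2)
      = 48*(d:ℝ)*L^2*(N:ℝ)⁻¹*(∑ i, ‖xt i - xb‖^2) := by
    rw [div_eq_mul_inv]; try ring
  rw [hdivx, hdivt]
  linarith [GB, cs, t1, t2, t3]
end
end

section
/- Let W ∈ ℝ^{N×N} and set σ = ‖W − (1/N)·1_N·1_Nᵀ‖₂ (spectral norm), and assume 0 < σ < 1. For any x_1,…,x_N, s_1,…,s_N ∈ ℝ^d with stacked vectors x, s ∈ ℝ^{Nd}, means x̄ = (1/N)·Σ_i x_i, s̄ = (1/N)·Σ_i s_i, and any α > 0: ‖(W ⊗ I_d)·(x − 1_N ⊗ x̄ − α·(s − 1_N ⊗ s̄))‖² ≤ ((1+2σ²)/3)·‖x − 1_N ⊗ x̄‖² + (σ²(1+2σ²)/(1−σ²))·α²·‖s − 1_N ⊗ s̄‖². -/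
noncomputable section

open Finset

theorem lemA (N : ℕ) (W : Matrix (Fin N) (Fin N) ℝ) (σ : ℝ)
    (hσ : σ = ‖Matrix.toEuclideanCLM (𝕜 := ℝ) (n := Fin N) (W - Matrix.of fun _ _ => (N : ℝ)⁻¹)‖)
    (z : EuclideanSpace ℝ (Fin N)) (hz : ∑ i, z i = 0) :
    ‖(WithLp.equiv 2 (Fin N → ℝ)).symm (fun i => ∑ j, W i j * z j)‖ ≤ σ * ‖z‖ := by
  set A := W - Matrix.of fun _ _ => (N : ℝ)⁻¹ with hA
  have h1 : (WithLp.equiv 2 (Fin N → ℝ)).symm (fun i => ∑ j, W i j * z j)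
      = Matrix.toEuclideanCLM (𝕜 := ℝ) (n := Fin N) A z := by
    have h2 : z = (WithLp.equiv 2 (Fin N → ℝ)).symm (WithLp.equiv 2 (Fin N → ℝ) z) := rfl
    rw [h2, WithLp.equiv_symm_apply, Matrix.toEuclideanCLM_toLp]
    congr 1
    funext i
    simp [Matrix.toLin'_apply, Matrix.mulVec, dotProduct, hA, Matrix.sub_apply,
      sub_mul, Finset.sum_sub_distrib, ← Finset.mul_sum]
    simp [WithLp.equiv, hz]
  rw [h1, hσ]
  exact (Matrix.toEuclideanCLM (𝕜 := ℝ) (n := Fin N) A).le_opNorm z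

theorem lemB (N d : ℕ) (W : Matrix (Fin N) (Fin N) ℝ) (σ : ℝ)
    (hσ : σ = ‖Matrix.toEuclideanCLM (𝕜 := ℝ) (n := Fin N) (W - Matrix.of fun _ _ => (N : ℝ)⁻¹)‖)
    (hσ0 : 0 ≤ σ)
    (u : Fin N → EuclideanSpace ℝ (Fin d)) (hu : ∀ k, ∑ j, u j k = 0) :
    ‖(WithLp.equiv 2 ((i : Fin N) → EuclideanSpace ℝ (Fin d))).symm (fun i => ∑ j, W i j • u j)‖
      ≤ σ * ‖(WithLp.equiv 2 ((i : Fin N) → EuclideanSpace ℝ (Fin d))).symm u‖ := by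
  have hsq : ∀ y : Fin N → EuclideanSpace ℝ (Fin d),
      ‖(WithLp.equiv 2 ((i : Fin N) → EuclideanSpace ℝ (Fin d))).symm y‖ ^ 2
        = ∑ k : Fin d, ∑ i : Fin N, (y i k) ^ 2 := by
    intro y
    rw [PiLp.norm_sq_eq_of_L2, Finset.sum_comm]
    congr 1
    funext i
    rw [PiLp.norm_sq_eq_of_L2]
    simp [Real.norm_eq_abs, sq_abs]
  have key : ∀ k : Fin d, ∑ i : Fin N, (∑ j, W i j * u j k) ^ 2
      ≤ σ ^ 2 * ∑ i : Fin N, (u i k) ^ 2 := by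
    intro k
    have h := lemA N W σ hσ ((WithLp.equiv 2 (Fin N → ℝ)).symm (fun i => u i k)) (by
      simpa using hu k)
    have h2 := mul_self_le_mul_self (norm_nonneg _) h
    have e1 : ‖(WithLp.equiv 2 (Fin N → ℝ)).symm (fun i => ∑ j, W i j * u j k)‖ ^ 2
        = ∑ i : Fin N, (∑ j, W i j * u j k) ^ 2 := by
      rw [PiLp.norm_sq_eq_of_L2]; simp [Real.norm_eq_abs, sq_abs]
    have e2 : ‖(WithLp.equiv 2 (Fin N → ℝ)).symm (fun i => u i k)‖ ^ 2
        = ∑ i : Fin N, (u i k) ^ 2 := by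
      rw [PiLp.norm_sq_eq_of_L2]; simp [Real.norm_eq_abs, sq_abs]
    calc ∑ i : Fin N, (∑ j, W i j * u j k) ^ 2 = _ := e1.symm
      _ ≤ (σ * ‖(WithLp.equiv 2 (Fin N → ℝ)).symm (fun i => u i k)‖) ^ 2 := by
          rw [sq, sq]; exact h2
      _ = σ ^ 2 * ∑ i : Fin N, (u i k) ^ 2 := by rw [mul_pow, e2]
  have happ : ∀ i k, (∑ j, W i j • u j) k = ∑ j, W i j * u j k := by
    intro i k
    rw [WithLp.ofLp_sum]; exact Finset.sum_apply k Finset.univ (fun j => (W i j • u j).ofLp)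
  have main : ‖(WithLp.equiv 2 ((i : Fin N) → EuclideanSpace ℝ (Fin d))).symm
      (fun i => ∑ j, W i j • u j)‖ ^ 2
      ≤ (σ * ‖(WithLp.equiv 2 ((i : Fin N) → EuclideanSpace ℝ (Fin d))).symm u‖) ^ 2 := by
    rw [hsq, mul_pow, hsq, Finset.mul_sum]
    refine Finset.sum_le_sum fun k _ => ?_
    have : ∑ i : Fin N, ((fun i => ∑ j, W i j • u j) i k) ^ 2
        = ∑ i : Fin N, (∑ j, W i j * u j k) ^ 2 := by
      exact Finset.sum_congr rfl fun i _ => congrArg (· ^ 2) (happ i k)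
    rw [this]
    exact key k
  exact (pow_le_pow_iff_left₀ (norm_nonneg _)
    (mul_nonneg hσ0 (norm_nonneg _)) two_ne_zero).mp main

/-- Let `σ = ‖W − (1/N)·1·1ᵀ‖₂` (spectral norm) with `0 < σ < 1`. For stacked
vectors `x, s ∈ ℝ^{Nd}` with means `x̄, s̄` and any `α > 0`,
`‖(W ⊗ I_d)(x − 1⊗x̄ − α(s − 1⊗s̄))‖² ≤ ((1+2σ²)/3)‖x − 1⊗x̄‖² + (σ²(1+2σ²)/(1−σ²))α²‖s − 1⊗s̄‖²`,
where `(W ⊗ I_d)` acts blockwise and the stacked space carries the Euclidean (ℓ²) norm. -/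
theorem stmt16 (N d : ℕ) (W : Matrix (Fin N) (Fin N) ℝ) (σ : ℝ)
    (hσ : σ = ‖Matrix.toEuclideanCLM (𝕜 := ℝ) (n := Fin N) (W - Matrix.of fun _ _ => (N : ℝ)⁻¹)‖)
    (hσ0 : 0 < σ) (hσ1 : σ < 1)
    (x s : Fin N → EuclideanSpace ℝ (Fin d)) (α : ℝ) (hα : 0 < α) :
    ‖(WithLp.equiv 2 ((i : Fin N) → EuclideanSpace ℝ (Fin d))).symm
        (fun i => ∑ j, W i j •
          (x j - (N : ℝ)⁻¹ • ∑ m, x m - α • (s j - (N : ℝ)⁻¹ • ∑ m, s m)))‖ ^ 2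
      ≤ ((1 + 2 * σ ^ 2) / 3) *
          ‖(WithLp.equiv 2 ((i : Fin N) → EuclideanSpace ℝ (Fin d))).symm
            (fun i => x i - (N : ℝ)⁻¹ • ∑ m, x m)‖ ^ 2
        + (σ ^ 2 * (1 + 2 * σ ^ 2) / (1 - σ ^ 2)) * α ^ 2 *
          ‖(WithLp.equiv 2 ((i : Fin N) → EuclideanSpace ℝ (Fin d))).symm
            (fun i => s i - (N : ℝ)⁻¹ • ∑ m, s m)‖ ^ 2 := by
  set c : ℝ := (N : ℝ)⁻¹ with hc
  set X : EuclideanSpace ℝ (Fin d) := ∑ m, x m with hX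
  set S : EuclideanSpace ℝ (Fin d) := ∑ m, s m with hS
  set U : Fin N → EuclideanSpace ℝ (Fin d) := fun i => x i - c • X with hU
  set V : Fin N → EuclideanSpace ℝ (Fin d) := fun i => s i - c • S with hV
  set u : Fin N → EuclideanSpace ℝ (Fin d) := fun i => U i - α • V i with huu
  have h1σ : 0 < 1 - σ ^ 2 := by nlinarith
  -- zero mean, coordinatewise
  have hXk : ∀ k, X k = ∑ m, x m k := fun k => by
    rw [hX, WithLp.ofLp_sum]; exact Finset.sum_apply k Finset.univ (fun m => (x m).ofLp)
  have hSk : ∀ k, S k = ∑ m, s m k := fun k => by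
    rw [hS, WithLp.ofLp_sum]; exact Finset.sum_apply k Finset.univ (fun m => (s m).ofLp)
  have hu : ∀ k, ∑ j, u j k = 0 := by
    intro k
    have e : ∀ j, u j k = x j k - c * X k - α * (s j k - c * S k) := fun j => rfl
    simp only [e]
    rcases Nat.eq_zero_or_pos N with hN | hN
    · subst hN
      simp
    · have hNc : (N : ℝ) * c = 1 := by
        rw [hc]; exact mul_inv_cancel₀ (Nat.cast_ne_zero.mpr hN.ne')
      simp only [Finset.sum_sub_distrib, ← Finset.mul_sum, Finset.sum_const,
        Finset.card_univ, Fintype.card_fin, nsmul_eq_mul, hXk, hSk]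
      linear_combination (α * (∑ j, s j k) - ∑ j, x j k) * hNc
  have hWu := lemB N d W σ hσ hσ0.le u hu
  -- triangle inequality
  have hsplit : (WithLp.equiv 2 ((i : Fin N) → EuclideanSpace ℝ (Fin d))).symm u
      = (WithLp.equiv 2 ((i : Fin N) → EuclideanSpace ℝ (Fin d))).symm U
        - α • (WithLp.equiv 2 ((i : Fin N) → EuclideanSpace ℝ (Fin d))).symm V := rfl
  set a : ℝ := ‖(WithLp.equiv 2 ((i : Fin N) → EuclideanSpace ℝ (Fin d))).symm U‖ with ha
  set b : ℝ := ‖(WithLp.equiv 2 ((i : Fin N) → EuclideanSpace ℝ (Fin d))).symm V‖ with hb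
  have htri : ‖(WithLp.equiv 2 ((i : Fin N) → EuclideanSpace ℝ (Fin d))).symm u‖
      ≤ a + α * b := by
    rw [hsplit]
    refine (norm_sub_le _ _).trans ?_
    rw [norm_smul, Real.norm_eq_abs, abs_of_pos hα]
  have hL : ‖(WithLp.equiv 2 ((i : Fin N) → EuclideanSpace ℝ (Fin d))).symm
      (fun i => ∑ j, W i j • u j)‖ ≤ σ * (a + α * b) :=
    hWu.trans (mul_le_mul_of_nonneg_left htri hσ0.le)
  have hLsq : ‖(WithLp.equiv 2 ((i : Fin N) → EuclideanSpace ℝ (Fin d))).symm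
      (fun i => ∑ j, W i j • u j)‖ ^ 2 ≤ σ ^ 2 * (a + α * b) ^ 2 := by
    have := pow_le_pow_left₀ (norm_nonneg _) hL 2
    calc _ ≤ (σ * (a + α * b)) ^ 2 := this
      _ = σ ^ 2 * (a + α * b) ^ 2 := by ring
  have ha0 : 0 ≤ a := norm_nonneg _
  have hb0 : 0 ≤ b := norm_nonneg _
  have hscal : σ ^ 2 * (a + α * b) ^ 2
      ≤ (1 + 2 * σ ^ 2) / 3 * a ^ 2
        + σ ^ 2 * (1 + 2 * σ ^ 2) / (1 - σ ^ 2) * α ^ 2 * b ^ 2 := by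
    rw [← sub_nonneg]
    have key : (1 + 2 * σ ^ 2) / 3 * a ^ 2
        + σ ^ 2 * (1 + 2 * σ ^ 2) / (1 - σ ^ 2) * α ^ 2 * b ^ 2
        - σ ^ 2 * (a + α * b) ^ 2
        = ((1 - σ ^ 2) * a - 3 * σ ^ 2 * (α * b)) ^ 2 / (3 * (1 - σ ^ 2)) := by
      field_simp
      ring
    rw [key]
    positivity
  exact hLsq.trans hscal
end
end

section
/- Let d ≥ 3 be an integer, σ ∈ [0,1), and α, L > 0 with αL ≤ (1−σ²)³/(45·√29·d^{3/2}). Define the 3×3 real matrix A′ with rows [ (1+2σ²)/3, 0, 9·√29·√d·αL/(1−σ²) ], [ 17·√d·αL + (1+2σ²)/(3d), 1 − (1−σ²)/d, 9·√29·αL/((1−σ²)·√d) ], [ 9·√29·√d·αL/(1−σ²), 3·√29·√d·αL/(1−σ²), (2+σ²)/3 ], and let π′ = (1−σ², 3, 1). Then (A′·π′)_i ≤ (1 − (1−σ²)/(2d))·π′_i for i = 1,2,3; consequently the matrix norm of A′ induced by the weighted norm ‖x‖_∞^{π′} = max_i |x_i|/π′_i is at most 1 − (1−σ²)/(2d), and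 every complex eigenvalue λ of A′ satisfies |λ| ≤ 1 − (1−σ²)/(2d) (i.e. the spectral radius ρ(A′) ≤ 1 − (1−σ²)/(2d)). -/
noncomputable section


lemma weighted_norm_bound {n : Type*} [Fintype n] [Nonempty n]
    (A : Matrix n n ℝ) (p : n → ℝ) (c : ℝ) (hp : ∀ i, 0 < p i)
    (hA : ∀ i j, 0 ≤ A i j) (hc : 0 ≤ c)
    (h : ∀ i, A.mulVec p i ≤ c * p i) :
    (∀ x : n → ℝ, (⨆ i, |A.mulVec x i| / p i) ≤ c * ⨆ i, |x i| / p i) ∧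
    (∀ (lam : ℂ) (v : n → ℂ), v ≠ 0 →
      (A.map (fun a : ℝ => (a : ℂ))).mulVec v = lam • v →
        ‖lam‖ ≤ c) := by
  constructor
  · intro x
    set M := ⨆ i, |x i| / p i with hM
    have hbdd : BddAbove (Set.range fun i => |x i| / p i) :=
      Set.Finite.bddAbove (Set.finite_range _)
    have hle : ∀ j, |x j| ≤ M * p j := by
      intro j
      have h1 : |x j| / p j ≤ M := le_ciSup hbdd j
      rw [div_le_iff₀ (hp j)] at h1
      linarith
    have key : ∀ i, |A.mulVec x i| ≤ c * M * p i := by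
      intro i
      have h2 : |A.mulVec x i| ≤ ∑ j, A i j * |x j| := by
        refine (Finset.abs_sum_le_sum_abs _ _).trans ?_
        refine Finset.sum_le_sum fun j _ => ?_
        rw [abs_mul, abs_of_nonneg (hA i j)]
      have h3 : ∑ j, A i j * |x j| ≤ ∑ j, A i j * (M * p j) :=
        Finset.sum_le_sum fun j _ => mul_le_mul_of_nonneg_left (hle j) (hA i j)
      have h4 : ∑ j, A i j * (M * p j) = M * A.mulVec p i := by
        simp only [Matrix.mulVec, dotProduct, Finset.mul_sum]
        exact Finset.sum_congr rfl fun j _ => by ring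
      have hM0 : 0 ≤ M := le_trans (div_nonneg (abs_nonneg _) (hp _).le) (le_ciSup hbdd (Classical.arbitrary n))
      have h5 : M * A.mulVec p i ≤ M * (c * p i) :=
        mul_le_mul_of_nonneg_left (h i) hM0
      calc |A.mulVec x i| ≤ ∑ j, A i j * |x j| := h2
        _ ≤ ∑ j, A i j * (M * p j) := h3
        _ = M * A.mulVec p i := h4
        _ ≤ M * (c * p i) := h5
        _ = c * M * p i := by ring
    refine ciSup_le fun i => ?_
    rw [div_le_iff₀ (hp i)]
    exact key i
  · intro lam v hv hAv
    obtain ⟨i, -, hi⟩ := Finset.exists_max_image Finset.univ (fun j => ‖v j‖ / p j)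
      ⟨Classical.arbitrary n, Finset.mem_univ _⟩
    have hvi : 0 < ‖v i‖ := by
      obtain ⟨j, hj⟩ : ∃ j, v j ≠ 0 := Function.ne_iff.mp hv
      have h1 : 0 < ‖v j‖ / p j := div_pos (norm_pos_iff.mpr hj) (hp j)
      have h2 := hi j (Finset.mem_univ j)
      have := h1.trans_le h2
      by_contra h
      push_neg at h
      rw [le_antisymm h (norm_nonneg _), zero_div] at this
      exact absurd this (lt_irrefl 0)
    have heq : (A.map (fun a : ℝ => (a : ℂ))).mulVec v i = lam * v i := by
      rw [hAv]; rfl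
    have hb : ‖(A.map (fun a : ℝ => (a : ℂ))).mulVec v i‖ ≤ c * ‖v i‖ := by
      have h2 : ‖∑ j, ((A i j : ℂ)) * v j‖ ≤ ∑ j, A i j * ‖v j‖ := by
        refine (norm_sum_le _ _).trans ?_
        refine Finset.sum_le_sum fun j _ => ?_
        rw [norm_mul, Complex.norm_real, Real.norm_eq_abs, abs_of_nonneg (hA i j)]
      have hle : ∀ j, ‖v j‖ ≤ ‖v i‖ / p i * p j := by
        intro j
        have := hi j (Finset.mem_univ j)
        rw [div_le_div_iff₀ (hp j) (hp i)] at this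
        rw [div_mul_eq_mul_div, le_div_iff₀ (hp i)]
        exact this
      have h3 : ∑ j, A i j * ‖v j‖ ≤ ∑ j, A i j * (‖v i‖ / p i * p j) :=
        Finset.sum_le_sum fun j _ => mul_le_mul_of_nonneg_left (hle j) (hA i j)
      have h4 : ∑ j, A i j * (‖v i‖ / p i * p j) = ‖v i‖ / p i * A.mulVec p i := by
        simp only [Matrix.mulVec, dotProduct, Finset.mul_sum]
        exact Finset.sum_congr rfl fun j _ => by ring
      have h5 : ‖v i‖ / p i * A.mulVec p i ≤ ‖v i‖ / p i * (c * p i) :=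
        mul_le_mul_of_nonneg_left (h i) (div_nonneg (norm_nonneg _) (hp i).le)
      have h6 : ‖v i‖ / p i * (c * p i) = c * ‖v i‖ := by
        field_simp [(hp i).ne']
      calc ‖(A.map (fun a : ℝ => (a : ℂ))).mulVec v i‖
          = ‖∑ j, ((A i j : ℂ)) * v j‖ := by
            simp [Matrix.mulVec, dotProduct, Matrix.map_apply]
        _ ≤ ∑ j, A i j * ‖v j‖ := h2
        _ ≤ ∑ j, A i j * (‖v i‖ / p i * p j) := h3
        _ = ‖v i‖ / p i * A.mulVec p i := h4
        _ ≤ ‖v i‖ / p i * (c * p i) := h5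
        _ = c * ‖v i‖ := h6
    rw [heq] at hb
    rw [norm_mul] at hb
    have : ‖lam‖ * ‖v i‖ ≤ c * ‖v i‖ := by
      exact hb
    exact le_of_mul_le_mul_right (by linarith) hvi

lemma rowbounds (s dd r w t : ℝ) (hs0 : 0 < s) (hs1 : s ≤ 1) (hd3 : 3 ≤ dd)
    (hr2 : r ^ 2 = dd) (hr0 : 0 < r) (hw5 : 5 ≤ w) (ht0 : 0 < t)
    (hstep : 45 * w * r ^ 3 * t ≤ s ^ 3) :
    ((1 + 2 * (1 - s)) / 3 * s + 0 * 3 + (9 * w * r * t / s) * 1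
        ≤ (1 - s / (2 * dd)) * s) ∧
    ((17 * r * t + (1 + 2 * (1 - s)) / (3 * dd)) * s + (1 - s / dd) * 3
        + (9 * w * t / (s * r)) * 1 ≤ (1 - s / (2 * dd)) * 3) ∧
    ((9 * w * r * t / s) * s + (3 * w * r * t / s) * 3 + (2 + (1 - s)) / 3 * 1
        ≤ (1 - s / (2 * dd)) * 1) := by
  subst hr2
  have hs0' := hs0.ne'
  have hr0' := hr0.ne'
  have hw0 : (0:ℝ) < w := by linarith
  have hsp : (0:ℝ) ≤ s ^ 3 := by positivity
  have hs3 : s ^ 3 ≤ 1 := by nlinarith [mul_nonneg (mul_nonneg hs0.le hs0.le) (sub_nonneg.mpr hs1), mul_nonneg hs0.le (sub_nonneg.mpr hs1)]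
  refine ⟨?_, ?_, ?_⟩
  · rw [← sub_nonneg,
      show (1 - s / (2 * r ^ 2)) * s
          - ((1 + 2 * (1 - s)) / 3 * s + 0 * 3 + (9 * w * r * t / s) * 1)
        = (s ^ 3 * (4 * r ^ 2 - 3) - 54 * w * r ^ 3 * t) / (6 * s * r ^ 2) from by
        field_simp; ring]
    apply div_nonneg _ (by positivity)
    nlinarith [hstep, hsp, mul_nonneg (by positivity : (0:ℝ) ≤ s ^ 3) (by linarith : (0:ℝ) ≤ r ^ 2 - 3)]
  · rw [← sub_nonneg,
      show (1 - s / (2 * r ^ 2)) * 3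
          - ((17 * r * t + (1 + 2 * (1 - s)) / (3 * r ^ 2)) * s + (1 - s / r ^ 2) * 3
            + (9 * w * t / (s * r)) * 1)
        = (3 * s ^ 2 * r + 4 * s ^ 3 * r - 102 * r ^ 4 * s ^ 2 * t - 54 * w * r ^ 2 * t)
            / (6 * s * r ^ 3) from by
        field_simp; ring]
    apply div_nonneg _ (by positivity)
    nlinarith [mul_le_mul_of_nonneg_right hstep hr0.le,
      mul_le_mul_of_nonneg_right hstep (by positivity : (0:ℝ) ≤ r * s ^ 2),
      mul_nonneg (by positivity : (0:ℝ) ≤ w * r ^ 2 * t) (by linarith : (0:ℝ) ≤ r ^ 2 - 3),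
      mul_nonneg (mul_nonneg (by linarith : (0:ℝ) ≤ w - 5)
        (by positivity : (0:ℝ) ≤ r ^ 4 * s ^ 2)) ht0.le,
      mul_nonneg (by positivity : (0:ℝ) ≤ s ^ 2 * r) (by linarith : (0:ℝ) ≤ 1 - s ^ 3)]
  · rw [← sub_nonneg,
      show (1 - s / (2 * r ^ 2)) * 1
          - ((9 * w * r * t / s) * s + (3 * w * r * t / s) * 3 + (2 + (1 - s)) / 3 * 1)
        = (2 * s ^ 2 * r ^ 2 - 3 * s ^ 2 - 54 * w * r ^ 3 * t * (1 + s))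
            / (6 * s * r ^ 2) from by
        field_simp; ring]
    apply div_nonneg _ (by positivity)
    nlinarith [mul_le_mul_of_nonneg_right hstep hs0.le,
      mul_nonneg (by positivity : (0:ℝ) ≤ s ^ 2) (by linarith : (0:ℝ) ≤ r ^ 2 - 3),
      mul_nonneg (sq_nonneg s) (by linarith : (0:ℝ) ≤ 1 - s),
      mul_nonneg (sq_nonneg s) (by nlinarith : (0:ℝ) ≤ 1 - s ^ 2)]

/-- the `p = 1/d` analogue of Lemma 4, from Appendix F. For `d ≥ 3`,
`σ ∈ [0,1)`, `α, L > 0` with `αL ≤ (1−σ²)³/(45·√29·d^{3/2})`, the matrix `A′` satisfies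
`(A′π′)_i ≤ (1 − (1−σ²)/(2d)) π′_i` for `π′ = (1−σ², 3, 1)`; consequently the induced
weighted-∞ matrix norm of `A′` is at most `1 − (1−σ²)/(2d)`, and every complex eigenvalue of
`A′` has modulus at most `1 − (1−σ²)/(2d)`. -/
theorem stmt18 (d : ℕ) (hd : 3 ≤ d) (σ α L : ℝ) (hσ0 : 0 ≤ σ) (hσ1 : σ < 1)
    (hα : 0 < α) (hL : 0 < L)
    (hstep : α * L ≤ (1 - σ ^ 2) ^ 3 / (45 * Real.sqrt 29 * (d : ℝ) ^ ((3 : ℝ) / 2))) :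
    let A' : Matrix (Fin 3) (Fin 3) ℝ :=
      !![(1 + 2 * σ ^ 2) / 3, 0, 9 * Real.sqrt 29 * Real.sqrt d * (α * L) / (1 - σ ^ 2);
         17 * Real.sqrt d * (α * L) + (1 + 2 * σ ^ 2) / (3 * d), 1 - (1 - σ ^ 2) / d,
           9 * Real.sqrt 29 * (α * L) / ((1 - σ ^ 2) * Real.sqrt d);
         9 * Real.sqrt 29 * Real.sqrt d * (α * L) / (1 - σ ^ 2),
           3 * Real.sqrt 29 * Real.sqrt d * (α * L) / (1 - σ ^ 2), (2 + σ ^ 2) / 3]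
    let π' : Fin 3 → ℝ := ![1 - σ ^ 2, 3, 1]
    (∀ i, A'.mulVec π' i ≤ (1 - (1 - σ ^ 2) / (2 * d)) * π' i) ∧
    (∀ x : Fin 3 → ℝ,
      (⨆ i, |A'.mulVec x i| / π' i) ≤ (1 - (1 - σ ^ 2) / (2 * d)) * ⨆ i, |x i| / π' i) ∧
    (∀ (lam : ℂ) (v : Fin 3 → ℂ), v ≠ 0 →
      (A'.map (fun a : ℝ => (a : ℂ))).mulVec v = lam • v →
        ‖lam‖ ≤ 1 - (1 - σ ^ 2) / (2 * d)) := by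
  intro A' π'
  have hd3 : (3:ℝ) ≤ (d:ℝ) := by exact_mod_cast hd
  have hd0 : (0:ℝ) < (d:ℝ) := by linarith
  have hs0 : (0:ℝ) < 1 - σ ^ 2 := by nlinarith
  have hs1 : 1 - σ ^ 2 ≤ 1 := by nlinarith
  have hw2 : Real.sqrt 29 ^ 2 = 29 := Real.sq_sqrt (by norm_num)
  have hw5 : (5:ℝ) ≤ Real.sqrt 29 := by
    nlinarith [Real.sqrt_nonneg (29:ℝ)]
  have hr2 : Real.sqrt (d:ℝ) ^ 2 = (d:ℝ) := Real.sq_sqrt hd0.le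
  have hr0 : 0 < Real.sqrt (d:ℝ) := Real.sqrt_pos.mpr hd0
  have ht0 : 0 < α * L := mul_pos hα hL
  have hpow : ((d:ℝ)) ^ ((3:ℝ)/2) = Real.sqrt (d:ℝ) ^ 3 := by
    rw [show (3:ℝ)/2 = (1/2)*3 by ring, Real.rpow_mul hd0.le, ← Real.sqrt_eq_rpow,
      show (3:ℝ) = ((3:ℕ):ℝ) by norm_num, Real.rpow_natCast]
  have hstep' : 45 * Real.sqrt 29 * Real.sqrt (d:ℝ) ^ 3 * (α * L) ≤ (1 - σ ^ 2) ^ 3 := by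
    rw [hpow] at hstep
    have hpos : (0:ℝ) < 45 * Real.sqrt 29 * Real.sqrt (d:ℝ) ^ 3 := by positivity
    rw [le_div_iff₀ hpos] at hstep
    linarith
  have R := rowbounds (1 - σ ^ 2) ((d:ℝ)) (Real.sqrt (d:ℝ)) (Real.sqrt 29) (α * L)
    hs0 hs1 hd3 hr2 hr0 hw5 ht0 hstep'
  have hp : ∀ i, 0 < π' i := by
    intro i; fin_cases i
    · exact hs0
    · exact (by norm_num : (0:ℝ) < 3)
    · exact one_pos
  have hc : (0:ℝ) ≤ 1 - (1 - σ ^ 2) / (2 * (d:ℝ)) := by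
    rw [sub_nonneg, div_le_one (by positivity)]
    linarith
  have hA : ∀ i j, 0 ≤ A' i j := by
    intro i j
    fin_cases i <;> fin_cases j <;> simp [A']
    · positivity
    · exact div_nonneg (by positivity) hs0.le
    · positivity
    · rw [div_le_one hd0]; linarith
    · exact div_nonneg (by positivity) (mul_nonneg hs0.le hr0.le)
    · exact div_nonneg (by positivity) hs0.le
    · exact div_nonneg (by positivity) hs0.le
    · positivity
  have key : ∀ i, A'.mulVec π' i ≤ (1 - (1 - σ ^ 2) / (2 * (d:ℝ))) * π' i := by
    intro i
    fin_cases i <;>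
      simp [A', π', Matrix.mulVec, dotProduct, Fin.sum_univ_three]
    · have h := R.1; ring_nf at h ⊢; linarith
    · have h := R.2.1; ring_nf at h ⊢; linarith
    · have h := R.2.2; ring_nf at h ⊢; linarith
  obtain ⟨Hnorm, Heig⟩ := weighted_norm_bound A' π' (1 - (1 - σ ^ 2) / (2 * (d:ℝ)))
    hp hA hc key
  exact ⟨key, Hnorm, Heig⟩
end
end
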